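/- arXiv:1010.1866 — 3 statements merged into one kernel-verified Lean document; each statement's English description precedes it below -/
import Mathlib

section
/- For any unrooted binary tree T with n leaves (n sufficiently large), there exist two internal nodes u, v and indices i, j such that the subtrees t_i(T,u) and t_j(T,v) are vertex-disjoint and each contains at least n/6 and at most n/3 leaves. -/
open SimpleGraph

/-- Degree via neighbor set cardinality (avoids decidability assumptions). -/
noncomputable def pdeg {V : Type} (g : SimpleGraph V) (v : V) : ℕ :=
  (g.neighborSet v).ncard

/-- `g` is a phylogeny on leaf type `L` with internal-node type `I`:
an unrooted binary tree whose leaves are exactly the `L`-vertices. -/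
def IsPhylo {L I : Type} (g : SimpleGraph (L ⊕ I)) : Prop :=
  g.Connected ∧ g.IsAcyclic ∧ (∀ l : L, pdeg g (Sum.inl l) = 1) ∧
    (∀ i : I, pdeg g (Sum.inr i) = 3)

/-- The side of the split determined by the edge `{u,v}` that contains `u`:
the set of taxa reachable from `u` after deleting that edge. -/
def splitOf {L I : Type} (g : SimpleGraph (L ⊕ I)) (u v : L ⊕ I) : Set L :=
  {x : L | (g.deleteEdges {s(u, v)}).Reachable (Sum.inl x) u}

/-- The set of (leaf-)splits of `g`, one for each oriented edge. -/
def splits {L I : Type} (g : SimpleGraph (L ⊕ I)) : Set (Set L) :=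
  {S | ∃ u v, g.Adj u v ∧ S = splitOf g u v}

/-- `quartetSplit g a b c d` means `g` induces the quartet topology `ab|cd`:
the path from `a` to `b` is vertex-disjoint from the path from `c` to `d`. -/
def quartetSplit {L I : Type} (g : SimpleGraph (L ⊕ I)) (a b c d : L) : Prop :=
  ∃ (p : g.Path (Sum.inl a) (Sum.inl b)) (q : g.Path (Sum.inl c) (Sum.inl d)),
    ∀ x ∈ p.1.support, x ∉ q.1.support

/-- The quartet distance between two phylogenies on the same taxa:
the number of 4-element subsets of taxa on which the induced quartet
topologies differ. -/
noncomputable def dQ {L I : Type} [Fintype L] [DecidableEq L] (g g' : SimpleGraph (L ⊕ I)) : ℕ :=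
  Set.ncard {s : Finset L | s.card = 4 ∧ ∃ a b c d : L, s = ({a, b, c, d} : Finset L) ∧
    quartetSplit g a b c d ∧ ¬ quartetSplit g' a b c d}

/-- The vertex set of the subtree `t_i(T,u)` obtained by removing vertex `u`,
namely the connected component of `g - u` containing the neighbour `w` of `u`. -/
def compOf {L I : Type} (g : SimpleGraph (L ⊕ I)) (u w : L ⊕ I) : Set (L ⊕ I) :=
  {x | ∃ (hx : x ≠ u) (hw : w ≠ u),
    (g.induce {v | v ≠ u}).Reachable ⟨x, hx⟩ ⟨w, hw⟩}

section Aux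
variable {L I : Type} {g : SimpleGraph (L ⊕ I)}
attribute [local instance] Classical.decEq

private lemma reach_of_walk {u : L ⊕ I} :
    ∀ {x w : L ⊕ I} (p : g.Walk x w), u ∉ p.support → ∀ (hx : x ≠ u) (hw : w ≠ u),
      (g.induce {v | v ≠ u}).Reachable ⟨x, hx⟩ ⟨w, hw⟩ := by
  intro x w p
  induction p with
  | nil => intro _ hx hw; rfl
  | @cons a b c h q ih =>
      intro hs hx hw
      simp only [Walk.support_cons, List.mem_cons] at hs
      push_neg at hs
      have hb : b ≠ u := fun e => hs.2 (e ▸ q.start_mem_support)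
      have hadj : (g.induce {v | v ≠ u}).Adj ⟨a, hx⟩ ⟨b, hb⟩ := by
        simp [h]
      exact hadj.reachable.trans (ih hs.2 hb hw)

lemma mem_compOf_iff {u w x : L ⊕ I} :
    x ∈ compOf g u w ↔ x ≠ u ∧ w ≠ u ∧ ∃ p : g.Walk x w, u ∉ p.support := by
  constructor
  · rintro ⟨hx, hw, ⟨p⟩⟩
    refine ⟨hx, hw, p.map (Embedding.induce {v : L ⊕ I | v ≠ u}).toHom, ?_⟩
    intro hu
    replace hu : u ∈ p.support.map (Embedding.induce (G := g) {v : L ⊕ I | v ≠ u}).toHom := by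
      rw [← Walk.support_map]; exact hu
    obtain ⟨⟨y, hy⟩, _, h2⟩ := List.mem_map.mp hu
    exact hy h2
  · rintro ⟨hx, hw, p, hp⟩
    exact ⟨hx, hw, reach_of_walk p hp hx hw⟩

lemma no_detour (ha : g.IsAcyclic) {u w w' : L ⊕ I} (h1 : g.Adj u w) (h2 : g.Adj u w')
    (hne : w ≠ w') (p : g.Walk w w') (hp : u ∉ p.support) : False := by
  have h2' : u ≠ w' := h2.ne
  have hq : (Walk.cons h1.symm (Walk.cons h2 Walk.nil)).IsPath := by
    simp [Walk.isPath_def, h1.ne', hne, h2.ne]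
  have := ha.path_unique p.toPath ⟨Walk.cons h1.symm (Walk.cons h2 Walk.nil), hq⟩
  have hu : u ∈ (p.toPath : g.Walk w w').support := by
    rw [this]; simp
  exact hp (p.support_toPath_subset hu)

lemma compOf_disjoint_of_ne (ha : g.IsAcyclic) {u w1 w2 : L ⊕ I} (h1 : g.Adj u w1)
    (h2 : g.Adj u w2) (hne : w1 ≠ w2) : Disjoint (compOf g u w1) (compOf g u w2) := by
  rw [Set.disjoint_left]
  intro x hx1 hx2
  obtain ⟨-, -, p1, hp1⟩ := mem_compOf_iff.mp hx1
  obtain ⟨-, -, p2, hp2⟩ := mem_compOf_iff.mp hx2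
  refine no_detour ha h1 h2 hne (p1.reverse.append p2) ?_
  rw [Walk.mem_support_append_iff, Walk.support_reverse]
  simp only [List.mem_reverse]
  tauto

lemma exists_comp_of_ne (hc : g.Connected) {u x : L ⊕ I} (hx : x ≠ u) :
    ∃ w, g.Adj u w ∧ x ∈ compOf g u w := by
  obtain ⟨q, hq⟩ : ∃ q : g.Walk u x, q.IsPath := ⟨(hc u x).some.toPath, (hc u x).some.toPath.2⟩
  cases q with
  | nil => exact absurd rfl hx
  | @cons _ y _ h r =>
      rw [Walk.cons_isPath_iff] at hq
      refine ⟨y, h, mem_compOf_iff.mpr ⟨hx, h.ne', r.reverse, ?_⟩⟩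
      rw [Walk.support_reverse, List.mem_reverse]
      exact hq.2

end Aux

section Aux2
variable {L I : Type} {g : SimpleGraph (L ⊕ I)}
attribute [local instance] Classical.decEq

lemma self_mem_compOf {u w : L ⊕ I} (h : g.Adj u w) : w ∈ compOf g u w :=
  mem_compOf_iff.mpr ⟨h.ne', h.ne', Walk.nil, by simp [h.ne]⟩

lemma compOf_subset (ha : g.IsAcyclic) {u w a : L ⊕ I} (hu : g.Adj u w) (hw : g.Adj w a)
    (hne : a ≠ u) : compOf g w a ⊆ compOf g u w := by
  intro x hx
  obtain ⟨hxw, haw, p, hp⟩ := mem_compOf_iff.mp hx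
  have hu' : u ∉ p.support := by
    intro hu'
    exact no_detour ha hu.symm hw hne.symm (p.dropUntil u hu')
      (fun hm => hp (p.support_dropUntil_subset hu' hm))
  refine mem_compOf_iff.mpr ⟨fun e => hu' (e ▸ p.start_mem_support), hu.ne', p.concat hw.symm, ?_⟩
  rw [Walk.support_concat]
  simp only [List.mem_append, List.mem_singleton]
  rintro (h | h)
  · exact hu' h
  · exact hu.ne h

lemma compOf_union_eq_univ (hc : g.Connected) (ha : g.IsAcyclic) {u w : L ⊕ I}
    (h : g.Adj u w) : compOf g u w ∪ compOf g w u = Set.univ := by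
  apply Set.eq_univ_of_forall
  intro x
  by_cases hxu : x = u
  · subst hxu
    exact Or.inr (mem_compOf_iff.mpr ⟨h.ne, h.ne, Walk.nil, by simp [h.ne']⟩)
  · obtain ⟨y, hy, hxy⟩ := exists_comp_of_ne hc hxu
    by_cases hyw : y = w
    · exact Or.inl (hyw ▸ hxy)
    · obtain ⟨-, -, p, hp⟩ := mem_compOf_iff.mp hxy
      have hw' : w ∉ p.support := by
        intro hw'
        exact no_detour ha h hy (fun e => hyw e.symm) (p.dropUntil w hw')
          (fun hm => hp (p.support_dropUntil_subset hw' hm))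
      refine Or.inr (mem_compOf_iff.mpr
        ⟨fun e => hw' (e ▸ p.start_mem_support), h.ne, p.concat hy.symm, ?_⟩)
      rw [Walk.support_concat]
      simp only [List.mem_append, List.mem_singleton]
      rintro (hh | hh)
      · exact hw' hh
      · exact h.ne' hh

private lemma head_step {u x w : L ⊕ I} :
    ∀ (r : g.Walk u x), r.IsPath → w ∉ r.support → u ≠ x →
      ∃ (y : L ⊕ I) (_ : g.Adj u y), y ≠ w ∧ ∃ t : g.Walk y x, u ∉ t.support ∧ w ∉ t.support := by
  intro r
  cases r with
  | nil => intro _ _ hne; exact absurd rfl hne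
  | @cons _ y _ h' t =>
      intro hp hw _
      rw [Walk.cons_isPath_iff] at hp
      simp only [Walk.support_cons, List.mem_cons] at hw
      push_neg at hw
      exact ⟨y, h', fun e => hw.2 (e ▸ t.start_mem_support), t, hp.2, hw.2⟩

lemma compOf_disjoint_sides (ha : g.IsAcyclic) {u w : L ⊕ I} (h : g.Adj u w) :
    Disjoint (compOf g u w) (compOf g w u) := by
  rw [Set.disjoint_left]
  intro x hx1 hx2
  obtain ⟨hxu, -, -⟩ := mem_compOf_iff.mp hx1
  obtain ⟨hxw, -, q0, hq0⟩ := mem_compOf_iff.mp hx2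
  have hq0' : w ∉ q0.reverse.support := by rwa [Walk.support_reverse, List.mem_reverse]
  obtain ⟨y, h', hyw, t, hut, -⟩ :=
    head_step (q0.reverse.toPath : g.Walk u x) q0.reverse.toPath.2
      (fun hm => hq0' (Walk.support_toPath_subset _ hm)) (Ne.symm hxu)
  have hxy : x ∈ compOf g u y := mem_compOf_iff.mpr
    ⟨hxu, h'.ne', t.reverse, by rw [Walk.support_reverse, List.mem_reverse]; exact hut⟩
  exact (compOf_disjoint_of_ne ha h h' (Ne.symm hyw)).le_bot ⟨hx1, hxy⟩

end Aux2

section Aux3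
variable {L I : Type} {g : SimpleGraph (L ⊕ I)}
attribute [local instance] Classical.decEq

lemma nbhd_of_leaf {l : L} {u : L ⊕ I} (hdeg : pdeg g (Sum.inl l) = 1)
    (h : g.Adj (Sum.inl l) u) : g.neighborSet (Sum.inl l) = {u} := by
  obtain ⟨a, ha⟩ := Set.ncard_eq_one.mp hdeg
  have : u ∈ ({a} : Set (L ⊕ I)) := ha ▸ h
  rw [Set.mem_singleton_iff] at this
  rw [ha, this]

lemma compOf_leaf {u : L ⊕ I} {l : L} (hdeg : pdeg g (Sum.inl l) = 1)
    (h : g.Adj u (Sum.inl l)) : compOf g u (Sum.inl l) = {Sum.inl l} := by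
  apply Set.eq_singleton_iff_unique_mem.mpr
  refine ⟨self_mem_compOf h, ?_⟩
  intro x hx
  obtain ⟨hxu, hlu, p, hp⟩ := mem_compOf_iff.mp hx
  by_contra hne
  have hp' : u ∉ p.reverse.support := by rwa [Walk.support_reverse, List.mem_reverse]
  obtain ⟨y, h', hyu, -⟩ :=
    head_step (w := u) (p.reverse.toPath : g.Walk (Sum.inl l) x) p.reverse.toPath.2
      (fun hm => hp' (Walk.support_toPath_subset _ hm)) (fun e => hne e.symm)
  have : y ∈ g.neighborSet (Sum.inl l) := h'
  rw [nbhd_of_leaf hdeg h.symm, Set.mem_singleton_iff] at this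
  exact hyu this

end Aux3

/-- Number of leaves in the subtree component. -/
noncomputable def lvc {L I : Type} (g : SimpleGraph (L ⊕ I)) (u w : L ⊕ I) : ℕ :=
  ({x : L | Sum.inl x ∈ compOf g u w}).ncard

section Aux4
variable {L I : Type} [Fintype L] [Fintype I] {g : SimpleGraph (L ⊕ I)}
attribute [local instance] Classical.decEq
set_option linter.unusedSectionVars false

lemma count_edge (hc : g.Connected) (ha : g.IsAcyclic) {u w : L ⊕ I} (h : g.Adj u w) :
    lvc g u w + lvc g w u = Fintype.card L := by
  classical
  set A := {x : L | Sum.inl x ∈ compOf g u w}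
  set B := {x : L | Sum.inl x ∈ compOf g w u}
  have hdisj : Disjoint A B := Set.disjoint_left.mpr fun x hx1 hx2 =>
    Set.disjoint_left.mp (compOf_disjoint_sides ha h) hx1 hx2
  have hun : A ∪ B = Set.univ := by
    apply Set.eq_univ_of_forall
    intro x
    have := Set.eq_univ_iff_forall.mp (compOf_union_eq_univ hc ha h) (Sum.inl x)
    rcases this with h1 | h1
    · exact Or.inl h1
    · exact Or.inr h1
  have := Set.ncard_union_eq hdisj A.toFinite B.toFinite
  rw [hun, Set.ncard_univ, Nat.card_eq_fintype_card] at this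
  exact this.symm

lemma exists_other_mem {α : Type*} {s : Set α} (h3 : s.ncard = 3) (u : α) :
    ∃ a ∈ s, a ≠ u := by
  obtain ⟨x, y, z, hxy, hxz, hyz, rfl⟩ := Set.ncard_eq_three.mp h3
  by_cases hx : x = u
  · exact ⟨y, by simp, fun e => hxy (hx.trans e.symm)⟩
  · exact ⟨x, by simp, hx⟩

lemma count3 (hc : g.Connected) (ha : g.IsAcyclic) {u : L ⊕ I}
    (hleaf : ∀ l : L, u ≠ Sum.inl l) {w1 w2 w3 : L ⊕ I}
    (hnb : g.neighborSet u = {w1, w2, w3}) (h12 : w1 ≠ w2) (h13 : w1 ≠ w3) (h23 : w2 ≠ w3) :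
    lvc g u w1 + lvc g u w2 + lvc g u w3 = Fintype.card L := by
  have hadj : ∀ w ∈ ({w1, w2, w3} : Set (L ⊕ I)), g.Adj u w := fun w hw => by
    rw [← hnb] at hw; exact hw
  have h1 : g.Adj u w1 := hadj w1 (by simp)
  have h2 : g.Adj u w2 := hadj w2 (by simp)
  have h3 : g.Adj u w3 := hadj w3 (by simp)
  set A1 := {x : L | Sum.inl x ∈ compOf g u w1}
  set A2 := {x : L | Sum.inl x ∈ compOf g u w2}
  set A3 := {x : L | Sum.inl x ∈ compOf g u w3}
  have hd : ∀ {a b : L ⊕ I}, g.Adj u a → g.Adj u b → a ≠ b →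
      Disjoint {x : L | Sum.inl x ∈ compOf g u a} {x : L | Sum.inl x ∈ compOf g u b} :=
    fun hA hB hne => Set.disjoint_left.mpr fun x hx1 hx2 =>
      Set.disjoint_left.mp (compOf_disjoint_of_ne ha hA hB hne) hx1 hx2
  have hd12 : Disjoint A1 A2 := hd h1 h2 h12
  have hd13 : Disjoint A1 A3 := hd h1 h3 h13
  have hd23 : Disjoint A2 A3 := hd h2 h3 h23
  have hun : A1 ∪ A2 ∪ A3 = Set.univ := by
    apply Set.eq_univ_of_forall
    intro x
    obtain ⟨w, hw, hxw⟩ := exists_comp_of_ne hc (fun e => hleaf x e.symm)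
    have : w ∈ ({w1, w2, w3} : Set (L ⊕ I)) := by rw [← hnb]; exact hw
    rcases this with rfl | rfl | rfl
    · exact Or.inl (Or.inl hxw)
    · exact Or.inl (Or.inr hxw)
    · exact Or.inr hxw
  have e1 : (A1 ∪ A2 ∪ A3).ncard = (A1 ∪ A2).ncard + A3.ncard :=
    Set.ncard_union_eq (Set.disjoint_union_left.mpr ⟨hd13, hd23⟩) (Set.toFinite _) (Set.toFinite _)
  have e2 : (A1 ∪ A2).ncard = A1.ncard + A2.ncard :=
    Set.ncard_union_eq hd12 (Set.toFinite _) (Set.toFinite _)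
  have : (A1 ∪ A2 ∪ A3).ncard = (Set.univ : Set L).ncard := by rw [hun]
  rw [e1, e2, Set.ncard_univ, Nat.card_eq_fintype_card] at this
  exact this

lemma comp_has_leaf_aux (ha : g.IsAcyclic) (hdeg3 : ∀ i : I, pdeg g (Sum.inr i) = 3) :
    ∀ (n : ℕ) (u w : L ⊕ I), (compOf g u w).ncard ≤ n → g.Adj u w →
      ∃ l : L, Sum.inl l ∈ compOf g u w := by
  intro n
  induction n with
  | zero =>
      intro u w hn h
      have : 0 < (compOf g u w).ncard :=
        (Set.ncard_pos (Set.toFinite _)).mpr ⟨w, self_mem_compOf h⟩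
      omega
  | succ n ih =>
      intro u w hn h
      cases w with
      | inl l => exact ⟨l, self_mem_compOf h⟩
      | inr i =>
          obtain ⟨a, ha', hau⟩ := exists_other_mem (hdeg3 i) u
          have haadj : g.Adj (Sum.inr i) a := ha'
          have hsub : compOf g (Sum.inr i) a ⊆ compOf g u (Sum.inr i) :=
            compOf_subset ha h haadj hau
          have hmem : Sum.inr i ∈ compOf g u (Sum.inr i) := self_mem_compOf h
          have hnmem : Sum.inr i ∉ compOf g (Sum.inr i) a := by
            intro hx
            exact (mem_compOf_iff.mp hx).1 rfl
          have hss : compOf g (Sum.inr i) a ⊂ compOf g u (Sum.inr i) :=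
            Set.ssubset_iff_subset_ne.mpr ⟨hsub, fun e => hnmem (e ▸ hmem)⟩
          have hlt := Set.ncard_lt_ncard hss (Set.toFinite _)
          obtain ⟨l, hl⟩ := ih (Sum.inr i) a (by omega) haadj
          exact ⟨l, hsub hl⟩

lemma one_le_lvc (ha : g.IsAcyclic) (hdeg3 : ∀ i : I, pdeg g (Sum.inr i) = 3)
    {u w : L ⊕ I} (h : g.Adj u w) : 1 ≤ lvc g u w := by
  obtain ⟨l, hl⟩ := comp_has_leaf_aux ha hdeg3 (compOf g u w).ncard u w le_rfl h
  have : 0 < ({x : L | Sum.inl x ∈ compOf g u w}).ncard :=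
    (Set.ncard_pos (Set.toFinite _)).mpr ⟨l, hl⟩
  unfold lvc
  omega

lemma lvc_leaf {u : L ⊕ I} {l : L} (hdeg : pdeg g (Sum.inl l) = 1)
    (h : g.Adj u (Sum.inl l)) : lvc g u (Sum.inl l) = 1 := by
  unfold lvc
  rw [compOf_leaf hdeg h]
  have : {x : L | Sum.inl x ∈ ({Sum.inl l} : Set (L ⊕ I))} = {l} := by
    ext x; simp
  rw [this, Set.ncard_singleton]

end Aux4

section Aux5
variable {L I : Type} [Fintype L] [Fintype I] {g : SimpleGraph (L ⊕ I)}
attribute [local instance] Classical.decEq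
set_option linter.unusedSectionVars false

lemma mem_three {α : Type*} {s : Set α} (h3 : s.ncard = 3) {u : α} (hu : u ∈ s) :
    ∃ a b, a ≠ u ∧ b ≠ u ∧ a ≠ b ∧ s = {u, a, b} := by
  obtain ⟨x, y, z, hxy, hxz, hyz, rfl⟩ := Set.ncard_eq_three.mp h3
  simp only [Set.mem_insert_iff, Set.mem_singleton_iff] at hu
  rcases hu with rfl | rfl | rfl
  · exact ⟨y, z, fun e => hxy e.symm, fun e => hxz e.symm, hyz, rfl⟩
  · exact ⟨x, z, hxy, fun e => hyz e.symm, hxz, by ext t; simp; tauto⟩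
  · exact ⟨x, y, hxz, hyz, hxy, by ext t; simp; tauto⟩

lemma key_min (hg : IsPhylo g) (hn : 7 ≤ Fintype.card L)
    (Q : L ⊕ I → L ⊕ I → Prop)
    (hQdesc : ∀ u w a, g.Adj u w → g.Adj w a → a ≠ u → Q u w → Q w a)
    {u0 w0 : L ⊕ I} (h0 : g.Adj u0 w0) (hQ0 : Q u0 w0)
    (hb0 : Fintype.card L ≤ 6 * lvc g u0 w0) :
    ∃ (i : I) (w : L ⊕ I), g.Adj (Sum.inr i) w ∧ Q (Sum.inr i) w ∧
      Fintype.card L ≤ 6 * lvc g (Sum.inr i) w ∧ 3 * lvc g (Sum.inr i) w ≤ Fintype.card L := by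
  obtain ⟨hc, ha, hl, hi⟩ := hg
  set n := Fintype.card L with hnn
  set S : Set ℕ := {c | ∃ u w, g.Adj u w ∧ Q u w ∧ n ≤ 6 * lvc g u w ∧ lvc g u w = c} with hS
  have hSne : S.Nonempty := ⟨lvc g u0 w0, u0, w0, h0, hQ0, hb0, rfl⟩
  obtain ⟨u, w, hadj, hQ, hb, hceq⟩ := Nat.sInf_mem hSne
  set c := sInf S with hcdef
  have hmin : ∀ u' w', g.Adj u' w' → Q u' w' → n ≤ 6 * lvc g u' w' → c ≤ lvc g u' w' :=
    fun u' w' h1 h2 h3 => Nat.sInf_le ⟨u', w', h1, h2, h3, rfl⟩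
  have h3c : 3 * c ≤ n := by
    by_contra h3c
    push_neg at h3c
    have hc2 : 2 ≤ c := by omega
    obtain ⟨k, rfl⟩ : ∃ k : I, w = Sum.inr k := by
      cases w with
      | inl l =>
          exfalso
          have := lvc_leaf (g := g) (hl l) hadj
          omega
      | inr k => exact ⟨k, rfl⟩
    have humem : u ∈ g.neighborSet (Sum.inr k) := hadj.symm
    obtain ⟨a, b, hau, hbu, hab, hnb⟩ := mem_three (hi k) humem
    have hka : g.Adj (Sum.inr k) a := by
      have : a ∈ g.neighborSet (Sum.inr k) := by rw [hnb]; simp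
      exact this
    have hkb : g.Adj (Sum.inr k) b := by
      have : b ∈ g.neighborSet (Sum.inr k) := by rw [hnb]; simp
      exact this
    have hcnt3 := count3 hc ha (u := Sum.inr k) (by simp) hnb
      (fun e => hau e.symm) (fun e => hbu e.symm) hab
    have hce := count_edge hc ha hadj
    have h1a := one_le_lvc ha hi hka
    have h1b := one_le_lvc ha hi hkb
    have final : ∀ p, g.Adj (Sum.inr k) p → p ≠ u → n ≤ 6 * lvc g (Sum.inr k) p →
        lvc g (Sum.inr k) p < c → False := by
      intro p hp hpu hbp hlt
      exact absurd (hmin _ _ hp (hQdesc u (Sum.inr k) p hadj hp hpu hQ) hbp) (by omega)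
    rcases le_total (lvc g (Sum.inr k) a) (lvc g (Sum.inr k) b) with hle | hle
    · exact final b hkb hbu (by omega) (by omega)
    · exact final a hka hau (by omega) (by omega)
  obtain ⟨i, rfl⟩ : ∃ i : I, u = Sum.inr i := by
    cases u with
    | inl l =>
        exfalso
        have h1 := lvc_leaf (g := g) (hl l) hadj.symm
        have hce := count_edge hc ha hadj
        omega
    | inr i => exact ⟨i, rfl⟩
  exact ⟨i, w, hadj, hQ, hb, by omega⟩

end Aux5

section Aux6
variable {L I : Type} [Fintype L] [Fintype I] {g : SimpleGraph (L ⊕ I)}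
attribute [local instance] Classical.decEq
set_option linter.unusedSectionVars false

lemma exists_internal (hg : IsPhylo g) (hn : 3 ≤ Fintype.card L) : Nonempty I := by
  obtain ⟨hc, ha, hl, hi⟩ := hg
  have hL : Nonempty L := Fintype.card_pos_iff.mp (by omega)
  obtain ⟨l1⟩ := hL
  obtain ⟨l2, hl2⟩ := Fintype.exists_ne_of_one_lt_card (by omega) l1
  obtain ⟨q, hq⟩ : ∃ q : g.Walk (Sum.inl l1) (Sum.inl l2), q.IsPath :=
    ⟨(hc (Sum.inl l1) (Sum.inl l2)).some.toPath, (hc (Sum.inl l1) (Sum.inl l2)).some.toPath.2⟩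
  cases q with
  | nil => exact absurd rfl hl2
  | @cons _ y _ h r =>
      cases y with
      | inr i => exact ⟨i⟩
      | inl l =>
          exfalso
          have hnl : g.neighborSet (Sum.inl l) = {Sum.inl l1} := nbhd_of_leaf (hl l) h.symm
          obtain ⟨l3, hl31, hl3l⟩ : ∃ l3 : L, l3 ≠ l1 ∧ l3 ≠ l := by
            by_contra hcon
            push_neg at hcon
            have hsub : (Finset.univ : Finset L) ⊆ {l1, l} := by
              intro x _
              rcases eq_or_ne x l1 with rfl | hx
              · simp
              · simp [hcon x hx]
            have h2 := Finset.card_le_card hsub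
            have h3 : ({l1, l} : Finset L).card ≤ 2 :=
              le_trans (Finset.card_insert_le _ _) (by simp)
            rw [Finset.card_univ] at h2
            omega
          obtain ⟨p0⟩ := hc (Sum.inl l1) (Sum.inl l3)
          obtain ⟨q', hq'⟩ : ∃ q' : g.Walk (Sum.inl l1) (Sum.inl l3), q'.IsPath :=
            ⟨p0.toPath, p0.toPath.2⟩
          cases q' with
          | nil => exact hl31 rfl
          | @cons _ y' _ h' r' =>
              rw [Walk.cons_isPath_iff] at hq'
              have hy' : y' = Sum.inl l := by
                have : y' ∈ g.neighborSet (Sum.inl l1) := h'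
                rwa [nbhd_of_leaf (hl l1) h, Set.mem_singleton_iff] at this
              subst hy'
              cases r' with
              | nil => exact hl3l rfl
              | @cons _ y'' _ h'' r'' =>
                  have hy'' : y'' = Sum.inl l1 := by
                    have : y'' ∈ g.neighborSet (Sum.inl l) := h''
                    rwa [hnl, Set.mem_singleton_iff] at this
                  apply hq'.2
                  rw [Walk.support_cons]
                  exact List.mem_cons_of_mem _ (hy'' ▸ r''.start_mem_support)
end Aux6

/-- For any unrooted binary tree with sufficiently many
leaves there are two vertex-disjoint subtrees of the form `t_i(T,u)`,
`t_j(T,v)` each containing at least `n/6` and at most `n/3` leaves. -/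
theorem exists_two_disjoint_balanced_subtrees :
    ∃ N : ℕ, ∀ (L I : Type) (_ : Fintype L) (_ : Fintype I)
      (g : SimpleGraph (L ⊕ I)), IsPhylo g → N ≤ Fintype.card L →
      ∃ (u v : I) (w w' : L ⊕ I), g.Adj (Sum.inr u) w ∧ g.Adj (Sum.inr v) w' ∧
        Disjoint (compOf g (Sum.inr u) w) (compOf g (Sum.inr v) w') ∧
        Fintype.card L ≤ 6 * Set.ncard {x : L | Sum.inl x ∈ compOf g (Sum.inr u) w} ∧
        3 * Set.ncard {x : L | Sum.inl x ∈ compOf g (Sum.inr u) w} ≤ Fintype.card L ∧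
        Fintype.card L ≤ 6 * Set.ncard {x : L | Sum.inl x ∈ compOf g (Sum.inr v) w'} ∧
        3 * Set.ncard {x : L | Sum.inl x ∈ compOf g (Sum.inr v) w'} ≤ Fintype.card L := by
  
  refine ⟨7, ?_⟩
  intro L I fL fI g hg hn
  have hc := hg.1
  have ha := hg.2.1
  have hl := hg.2.2.1
  have hi := hg.2.2.2
  obtain ⟨i0⟩ : Nonempty I := exists_internal hg (by omega)
  obtain ⟨x, y, z, hxy, hxz, hyz, hnb⟩ := Set.ncard_eq_three.mp (hi i0)
  have hx0 : g.Adj (Sum.inr i0) x := by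
    have : x ∈ g.neighborSet (Sum.inr i0) := by rw [hnb]; simp
    exact this
  have hy0 : g.Adj (Sum.inr i0) y := by
    have : y ∈ g.neighborSet (Sum.inr i0) := by rw [hnb]; simp
    exact this
  have hz0 : g.Adj (Sum.inr i0) z := by
    have : z ∈ g.neighborSet (Sum.inr i0) := by rw [hnb]; simp
    exact this
  have hsum := count3 hc ha (u := Sum.inr i0) (by simp) hnb hxy hxz hyz
  obtain ⟨w0, hw0adj, hw0b⟩ : ∃ w0, g.Adj (Sum.inr i0) w0 ∧
      Fintype.card L ≤ 6 * lvc g (Sum.inr i0) w0 := by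
    have : Fintype.card L ≤ 6 * lvc g (Sum.inr i0) x ∨
        Fintype.card L ≤ 6 * lvc g (Sum.inr i0) y ∨
        Fintype.card L ≤ 6 * lvc g (Sum.inr i0) z := by omega
    rcases this with h | h | h
    · exact ⟨x, hx0, h⟩
    · exact ⟨y, hy0, h⟩
    · exact ⟨z, hz0, h⟩
  obtain ⟨u1, w1, hadj1, -, hb1, h3b1⟩ :=
    key_min hg hn (fun _ _ => True) (fun _ _ _ _ _ _ _ => trivial) hw0adj trivial hw0b
  obtain ⟨k, rfl⟩ : ∃ k : I, w1 = Sum.inr k := by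
    cases w1 with
    | inl l =>
        exfalso
        have := lvc_leaf (g := g) (hl l) hadj1
        omega
    | inr k => exact ⟨k, rfl⟩
  have hce := count_edge hc ha hadj1
  obtain ⟨u2, w2, hadj2, hdisj2, hb2, h3b2⟩ :=
    key_min hg hn (fun v w' => Disjoint (compOf g (Sum.inr u1) (Sum.inr k)) (compOf g v w'))
      (fun u w a h1 h2 h3 hQ => hQ.mono_right (compOf_subset ha h1 h2 h3))
      hadj1.symm (compOf_disjoint_sides ha hadj1) (by omega)
  exact ⟨u1, u2, Sum.inr k, w2, hadj1, hadj2, hdisj2, hb1, h3b1, hb2, h3b2⟩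
end

section
/- If T and T' are two distinct unrooted binary trees on the same set of n ≥ 4 leaves, then the quartet distance d_Q(T,T') is at least n − 3. -/
open SimpleGraph

namespace QD

variable {V : Type}

def Svert (g : SimpleGraph V) (u v : V) : Set V :=
  {z : V | (g.deleteEdges {s(u, v)}).Reachable z u}

lemma sym2_ne {u v w : V} (h1 : w ≠ u) (h2 : w ≠ v) : s(w, u) ≠ s(u, v) := by
  rw [Ne, Sym2.eq_iff]
  rintro (⟨h, _⟩ | ⟨h, _⟩)
  exacts [h1 h, h2 h]

variable {g : SimpleGraph V} {u v : V}

lemma bridge (hac : g.IsAcyclic) (h : g.Adj u v) :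
    ¬ (g.deleteEdges {s(u, v)}).Reachable u v :=
  ((isAcyclic_iff_forall_adj_isBridge.mp hac) h)

lemma svert_swap : Svert g v u = {z : V | (g.deleteEdges {s(u, v)}).Reachable z v} := by
  unfold Svert
  rw [Sym2.eq_swap]

lemma mem_svert_self : u ∈ Svert g u v := Reachable.refl _

lemma walk_side (h : g.Adj u v) {x y : V} (W : g.Walk x y)
    (hy : (g.deleteEdges {s(u, v)}).Reachable y u ∨ (g.deleteEdges {s(u, v)}).Reachable y v) :
    (g.deleteEdges {s(u, v)}).Reachable x u ∨ (g.deleteEdges {s(u, v)}).Reachable x v := by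
  induction W with
  | nil => exact hy
  | @cons a b c hadj W' ih =>
    by_cases he : s(a, b) = s(u, v)
    · rw [Sym2.eq_iff] at he
      rcases he with ⟨rfl, rfl⟩ | ⟨rfl, rfl⟩
      · exact Or.inl (Reachable.refl _)
      · exact Or.inr (Reachable.refl _)
    · have hadj' : (g.deleteEdges {s(u, v)}).Adj a b := by
        rw [deleteEdges_adj]
        exact ⟨hadj, by simpa using he⟩
      rcases ih hy with h1 | h1
      · exact Or.inl (hadj'.reachable.trans h1)
      · exact Or.inr (hadj'.reachable.trans h1)

lemma svert_total (hc : g.Connected) (h : g.Adj u v) (w : V) :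
    w ∈ Svert g u v ∨ w ∈ Svert g v u := by
  rw [svert_swap (u := u) (v := v)]
  exact walk_side h ((hc w u).some) (Or.inl (Reachable.refl _))

lemma svert_disjoint (hac : g.IsAcyclic) (h : g.Adj u v) {w : V}
    (h1 : w ∈ Svert g u v) (h2 : w ∈ Svert g v u) : False := by
  rw [svert_swap (u := u) (v := v)] at h2
  exact bridge hac h (h1.symm.trans h2)

lemma reach_of_walk_avoid {x y : V} (W : g.Walk x y) (h : s(u, v) ∉ W.edges) :
    (g.deleteEdges {s(u, v)}).Reachable x y := by
  refine (W.toDeleteEdges _ ?_).reachable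
  intro e he
  simp only [Set.mem_singleton_iff]
  rintro rfl
  exact h he

lemma crossing (hac : g.IsAcyclic) (h : g.Adj u v) {x y : V} (W : g.Walk x y)
    (hx : x ∈ Svert g u v) (hy : y ∈ Svert g v u) :
    u ∈ W.support ∧ v ∈ W.support := by
  by_cases he : s(u, v) ∈ W.edges
  · exact ⟨W.fst_mem_support_of_mem_edges he, W.snd_mem_support_of_mem_edges he⟩
  · exfalso
    have hr := reach_of_walk_avoid W he
    rw [svert_swap (u := u) (v := v)] at hy
    exact bridge hac h (hx.symm.trans (hr.trans hy))

lemma support_subset_side [DecidableEq V] {x y : V} (W : (g.deleteEdges {s(u, v)}).Walk x y)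
    (hy : y ∈ Svert g u v) : ∀ z ∈ W.support, z ∈ Svert g u v := fun z hz =>
  ((W.dropUntil z hz).reachable).trans hy

lemma frontier {S : Set V} :
    ∀ {x y : V} (_ : g.Walk x y), x ∉ S → y ∈ S →
      ∃ (a b : V) (Wa : g.Walk x a), g.Adj a b ∧ a ∉ S ∧ b ∈ S ∧ ∀ z ∈ Wa.support, z ∉ S := by
  intro x y W
  induction W with
  | nil => intro hx hy; exact absurd hy hx
  | @cons a b c hadj W' ih =>
    intro hx hy
    by_cases hb : b ∈ S
    · exact ⟨a, b, Walk.nil, hadj, hx, hb, by simp [hx]⟩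
    · obtain ⟨a', b', Wa, h1, h2, h3, h4⟩ := ih hb hy
      exact ⟨a', b', Walk.cons hadj Wa, h1, h2, h3, by
        intro z hz
        rw [Walk.support_cons] at hz
        rcases List.mem_cons.mp hz with rfl | hz
        · exact hx
        · exact h4 z hz⟩

lemma transfer_up {s : Set (Sym2 V)} {x y : V} (W : (g.deleteEdges s).Walk x y) :
    ∃ W' : g.Walk x y, W'.support = W.support ∧ W'.edges = W.edges := by
  refine ⟨W.transfer g (fun e he => edgeSet_mono (deleteEdges_le s) (W.edges_subset_edgeSet he)),
    W.support_transfer _, W.edges_transfer _⟩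

lemma edge_not_mem_of_not_mem_support {x y w : V} (W : g.Walk x y) (h : u ∉ W.support) :
    s(u, w) ∉ W.edges := fun he => h (W.fst_mem_support_of_mem_edges he)

end QD

namespace QD

variable {L I : Type} {g : SimpleGraph (L ⊕ I)}

lemma mem_splitOf_iff {u v : L ⊕ I} {x : L} :
    x ∈ splitOf g u v ↔ Sum.inl x ∈ Svert g u v := Iff.rfl

/-- the unique neighbor of a leaf -/
lemma leaf_nbr (hg : IsPhylo g) (l : L) : ∃ v, g.neighborSet (Sum.inl l) = {v} :=
  Set.ncard_eq_one.mp (hg.2.2.1 l)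

lemma int_nbrs (hg : IsPhylo g) {i : I} {v : L ⊕ I} (hv : g.Adj (Sum.inr i) v) :
    ∃ w1 w2, w1 ≠ w2 ∧ w1 ≠ v ∧ w2 ≠ v ∧ g.neighborSet (Sum.inr i) = {v, w1, w2} := by
  obtain ⟨x, y, z, hxy, hxz, hyz, hset⟩ := Set.ncard_eq_three.mp (hg.2.2.2 i)
  have hvmem : v ∈ ({x, y, z} : Set (L ⊕ I)) := hset ▸ hv
  simp only [Set.mem_insert_iff, Set.mem_singleton_iff] at hvmem
  rcases hvmem with rfl | rfl | rfl
  · exact ⟨y, z, hyz, fun h => hxy h.symm, fun h => hxz h.symm, hset⟩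
  · refine ⟨x, z, hxz, hxy, fun h => hyz h.symm, hset.trans ?_⟩
    ext w; simp only [Set.mem_insert_iff, Set.mem_singleton_iff]; tauto
  · refine ⟨x, y, hxy, hxz, hyz, hset.trans ?_⟩
    ext w; simp only [Set.mem_insert_iff, Set.mem_singleton_iff]; tauto

/-- a leaf's split is a singleton -/
lemma splitOf_leaf_eq (hg : IsPhylo g) {l : L} {v : L ⊕ I} (h : g.Adj (Sum.inl l) v) :
    splitOf g (Sum.inl l) v = {l} := by
  obtain ⟨v', hv'⟩ := leaf_nbr hg l
  have hvv : v = v' := by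
    have : v ∈ g.neighborSet (Sum.inl l) := h
    rwa [hv', Set.mem_singleton_iff] at this
  subst hvv
  ext x
  simp only [Set.mem_singleton_iff]
  constructor
  · intro hx
    by_contra hxl
    obtain ⟨W⟩ := hx
    have hne : (Sum.inl l : L ⊕ I) ≠ Sum.inl x := fun hh => hxl (by injection hh.symm)
    obtain ⟨z, hadj, W', -⟩ := SimpleGraph.Walk.not_nil_iff.mp (Walk.not_nil_of_ne hne (p := W.reverse))
    rw [deleteEdges_adj] at hadj
    have hz : z ∈ g.neighborSet (Sum.inl l) := hadj.1
    rw [hv', Set.mem_singleton_iff] at hz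
    subst hz
    exact hadj.2 rfl
  · rintro rfl
    exact Reachable.refl _
end QD

namespace QD

section Generic2
variable {V : Type} {g : SimpleGraph V} {u v : V}

lemma exists_walk_avoid (hac : g.IsAcyclic) (h : g.Adj u v) {z : V} (hz : z ∈ Svert g u v) :
    ∃ W : g.Walk z u, v ∉ W.support := by
  classical
  obtain ⟨W⟩ := hz
  have hsupp := support_subset_side W (mem_svert_self (v := v))
  obtain ⟨W', hs, -⟩ := transfer_up W
  refine ⟨W', fun hv => ?_⟩
  rw [hs] at hv
  exact svert_disjoint hac h (hsupp v hv) mem_svert_self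

lemma not_mem_svert_self (hac : g.IsAcyclic) (h : g.Adj u v) : v ∉ Svert g u v := fun hv =>
  svert_disjoint hac h hv mem_svert_self

end Generic2

variable {L I : Type} {g : SimpleGraph (L ⊕ I)}

lemma adj_of_mem_nbr {u z : L ⊕ I} (h : z ∈ g.neighborSet u) : g.Adj u z := h

/-- subtree side of a neighbor is inside the side of the vertex -/
lemma svert_nbr_subset (hac : g.IsAcyclic) {u v w1 : L ⊕ I} (huv : g.Adj u v)
    (hw1 : g.Adj u w1) (hne : w1 ≠ v) :
    Svert g w1 u ⊆ Svert g u v := by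
  intro z hz
  obtain ⟨W, hWu⟩ := exists_walk_avoid hac hw1.symm hz
  have hedge : s(u, v) ∉ W.edges := by
    intro he
    exact hWu (W.snd_mem_support_of_mem_edges ((Sym2.eq_swap (a := u) (b := v)) ▸ he))
  have hr : (g.deleteEdges {s(u, v)}).Reachable z w1 := reach_of_walk_avoid W hedge
  have hadj : (g.deleteEdges {s(u, v)}).Adj w1 u := by
    rw [deleteEdges_adj]
    exact ⟨hw1.symm, by simpa using sym2_ne hw1.ne' hne⟩
  exact hr.trans hadj.reachable

lemma exists_leaf_side [Fintype L] [Fintype I] (hg : IsPhylo g) :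
    ∀ {u v : L ⊕ I}, g.Adj u v → ∃ l, Sum.inl l ∈ Svert g u v := by
  classical
  suffices key : ∀ (n : ℕ) (u v : L ⊕ I), g.Adj u v → (Svert g u v).ncard ≤ n →
      ∃ l, Sum.inl l ∈ Svert g u v by
    intro u v h
    exact key (Svert g u v).ncard u v h le_rfl
  intro n
  induction n with
  | zero =>
    intro u v h hle
    exfalso
    have : (Svert g u v).Nonempty := ⟨u, mem_svert_self⟩
    have := Set.ncard_pos (Set.toFinite _) |>.mpr this
    omega
  | succ n ih =>
    intro u v h hle
    match u, h with
    | Sum.inl l, h => exact ⟨l, mem_svert_self⟩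
    | Sum.inr i, h =>
      obtain ⟨w1, w2, h12, h1v, h2v, hnb⟩ := int_nbrs hg h
      have hw1 : g.Adj (Sum.inr i) w1 := adj_of_mem_nbr (by rw [hnb]; simp)
      have hsub : Svert g w1 (Sum.inr i) ⊆ Svert g (Sum.inr i) v :=
        svert_nbr_subset hg.2.1 h hw1 h1v
      have hnu : (Sum.inr i : L ⊕ I) ∉ Svert g w1 (Sum.inr i) :=
        not_mem_svert_self hg.2.1 hw1.symm
      have hlt : (Svert g w1 (Sum.inr i)).ncard < (Svert g (Sum.inr i) v).ncard := by
        apply Set.ncard_lt_ncard _ (Set.toFinite _)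
        exact ⟨hsub, fun hts => hnu (hts mem_svert_self)⟩
      obtain ⟨l, hl⟩ := ih w1 (Sum.inr i) hw1.symm (by omega)
      exact ⟨l, hsub hl⟩

lemma splitOf_compl (hg : IsPhylo g) {u v : L ⊕ I} (h : g.Adj u v) :
    splitOf g v u = (splitOf g u v)ᶜ := by
  ext x
  constructor
  · intro hx hx'
    exact svert_disjoint hg.2.1 h hx' hx
  · intro hx
    rcases svert_total hg.1 h (Sum.inl x) with h1 | h1
    · exact absurd h1 hx
    · exact h1

lemma splits_compl (hg : IsPhylo g) {S : Set L} (hS : S ∈ splits g) : Sᶜ ∈ splits g := by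
  obtain ⟨u, v, h, rfl⟩ := hS
  exact ⟨v, u, h.symm, (splitOf_compl hg h).symm⟩

lemma splitOf_nonempty [Fintype L] [Fintype I] (hg : IsPhylo g) {u v : L ⊕ I} (h : g.Adj u v) :
    (splitOf g u v).Nonempty := exists_leaf_side hg h

/-- decomposition of a side at an internal vertex -/
lemma splitOf_decomp (hg : IsPhylo g) {i : I} {v w1 w2 : L ⊕ I}
    (hnb : g.neighborSet (Sum.inr i) = {v, w1, w2}) (h12 : w1 ≠ w2) (h1v : w1 ≠ v)
    (h2v : w2 ≠ v) (hv : g.Adj (Sum.inr i) v) :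
    splitOf g (Sum.inr i) v = splitOf g w1 (Sum.inr i) ∪ splitOf g w2 (Sum.inr i) ∧
      splitOf g w1 (Sum.inr i) ∩ splitOf g w2 (Sum.inr i) = ∅ := by
  classical
  set u : L ⊕ I := Sum.inr i with hu
  have hw1 : g.Adj u w1 := adj_of_mem_nbr (by rw [hnb]; simp)
  have hw2 : g.Adj u w2 := adj_of_mem_nbr (by rw [hnb]; simp)
  constructor
  · ext x
    constructor
    · intro hx
      obtain ⟨W0⟩ := hx
      let P := W0.toPath
      have hne : u ≠ Sum.inl x := by simp [hu]
      have hnn : ¬ (P.1.reverse).Nil := Walk.not_nil_of_ne hne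
      obtain ⟨z, hadj, W', hWeq⟩ := Walk.not_nil_iff.mp hnn
      have hrevpath : (P.1.reverse).IsPath := P.2.reverse
      rw [hWeq] at hrevpath
      have hup : u ∉ W'.support := by
        rw [Walk.cons_isPath_iff] at hrevpath
        exact hrevpath.2
      rw [deleteEdges_adj] at hadj
      have hz3 : z ∈ ({v, w1, w2} : Set (L ⊕ I)) := by rw [← hnb]; exact hadj.1
      have hzv : z ≠ v := by
        rintro rfl
        exact hadj.2 rfl
      have hzw : z = w1 ∨ z = w2 := by
        simp only [Set.mem_insert_iff, Set.mem_singleton_iff] at hz3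
        tauto
      -- walk from inl x to z avoiding u
      obtain ⟨W'', hs, he⟩ := transfer_up W'.reverse
      have hxz : Sum.inl x ∈ Svert g z u := by
        refine reach_of_walk_avoid W'' ?_
        intro hedge
        apply hup
        have := W''.snd_mem_support_of_mem_edges hedge
        rw [hs, Walk.support_reverse] at this
        simpa using this
      rcases hzw with rfl | rfl
      · exact Or.inl hxz
      · exact Or.inr hxz
    · intro hx
      rcases hx with hx | hx
      · exact svert_nbr_subset hg.2.1 hv hw1 h1v hx
      · exact svert_nbr_subset hg.2.1 hv hw2 h2v hx
  · ext x
    simp only [Set.mem_inter_iff, Set.mem_empty_iff_false, iff_false, not_and]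
    intro h1 h2
    obtain ⟨W, hWu⟩ := exists_walk_avoid hg.2.1 hw1.symm h1
    -- W : g.Walk (inl x) w1, u ∉ support
    have hedge : s(w2, u) ∉ W.edges := fun he => hWu (W.snd_mem_support_of_mem_edges he)
    have hW2 : s(w1, u) ≠ s(w2, u) := by
      rw [Ne, Sym2.eq_iff]
      rintro (⟨h', -⟩ | ⟨h', -⟩)
      · exact h12 h'
      · exact hw1.ne' h'
    have hr : (g.deleteEdges {s(w2, u)}).Reachable (Sum.inl x) w1 := reach_of_walk_avoid W hedge
    have hadj : (g.deleteEdges {s(w2, u)}).Adj w1 u := by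
      rw [deleteEdges_adj]
      exact ⟨hw1.symm, by simpa using hW2⟩
    have hru : (g.deleteEdges {s(w2, u)}).Reachable (Sum.inl x) u := hr.trans hadj.reachable
    exact bridge hg.2.1 hw2.symm ((h2.symm.trans hru))

end QD

namespace QD

section Generic3
variable {V : Type} {g : SimpleGraph V} {u v u' v' z : V}

lemma exists_walk_in_side (hz : z ∈ Svert g u v) :
    ∃ W : g.Walk z u, ∀ y ∈ W.support, y ∈ Svert g u v := by
  classical
  obtain ⟨W⟩ := hz
  have hsupp := support_subset_side W (mem_svert_self (v := v))
  obtain ⟨W', hs, -⟩ := transfer_up W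
  exact ⟨W', fun y hy => hsupp y (hs ▸ hy)⟩

lemma adj_same_side (h' : g.Adj u' v') (hne : s(u', v') ≠ s(u, v))
    (hu' : u' ∈ Svert g u v) : v' ∈ Svert g u v := by
  have hadj : (g.deleteEdges {s(u, v)}).Adj u' v' := by
    rw [deleteEdges_adj]
    exact ⟨h', by simpa using hne⟩
  exact hadj.reachable.symm.trans hu'

/-- key helper for compatibility -/
lemma side_helper (hac : g.IsAcyclic) (hc : g.Connected) (h : g.Adj u v)
    (h' : g.Adj u' v') (hu' : u' ∈ Svert g u v) (hv : v ∈ Svert g u' v') :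
    ∀ z, z ∉ Svert g u v → z ∈ Svert g u' v' := by
  intro z hz
  have hz' : z ∈ Svert g v u := (svert_total hc h z).resolve_left hz
  obtain ⟨W, hW⟩ := exists_walk_in_side hz'
  have hu'W : u' ∉ W.support := fun hmem => svert_disjoint hac h hu' (hW u' hmem)
  have hedge : s(u', v') ∉ W.edges := fun he => hu'W (W.fst_mem_support_of_mem_edges he)
  exact (reach_of_walk_avoid W hedge).trans hv

end Generic3

variable {L I : Type} {g : SimpleGraph (L ⊕ I)}

lemma not_mem_splitOf_iff (hg : IsPhylo g) {u v : L ⊕ I} (h : g.Adj u v) {x : L} :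
    x ∉ splitOf g u v ↔ x ∈ splitOf g v u := by
  constructor
  · intro hx
    exact (svert_total hg.1 h (Sum.inl x)).resolve_left hx
  · intro hx hx'
    exact svert_disjoint hg.2.1 h hx' hx

/-- compatibility of two splits of a tree -/
lemma splits_compatible (hg : IsPhylo g) {S S' : Set L} (hS : S ∈ splits g)
    (hS' : S' ∈ splits g) :
    S ⊆ S' ∨ S' ⊆ S ∨ S ∩ S' = ∅ ∨ S ∪ S' = Set.univ := by
  obtain ⟨u, v, h, rfl⟩ := hS
  obtain ⟨u', v', h', rfl⟩ := hS'
  by_cases hee : s(u', v') = s(u, v)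
  · rcases Sym2.eq_iff.mp hee with ⟨rfl, rfl⟩ | ⟨rfl, rfl⟩
    · exact Or.inl subset_rfl
    · refine Or.inr (Or.inr (Or.inl ?_))
      rw [splitOf_compl hg h']
      exact Set.compl_inter_self _
  · have hee' : s(u', v') ≠ s(v, u) := by rwa [Sym2.eq_swap (a := v) (b := u)]
    rcases svert_total hg.1 h u' with h1 | h1
    · have h2 : v' ∈ Svert g u v := adj_same_side h' hee h1
      rcases svert_total hg.1 h' v with h3 | h3
      · -- union is everything
        refine Or.inr (Or.inr (Or.inr ?_))
        rw [Set.eq_univ_iff_forall]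
        intro x
        rcases Classical.em (x ∈ splitOf g u v) with hx | hx
        · exact Or.inl hx
        · exact Or.inr (side_helper hg.2.1 hg.1 h h' h1 h3 _ hx)
      · -- S' ⊆ S
        refine Or.inr (Or.inl ?_)
        intro x hx
        by_contra hxS
        have := side_helper hg.2.1 hg.1 h h'.symm h2 h3 _ hxS
        exact svert_disjoint hg.2.1 h' hx this
    · have h2 : v' ∈ Svert g v u := adj_same_side h' hee' h1
      rcases svert_total hg.1 h' u with h3 | h3
      · -- S ⊆ S'
        refine Or.inl ?_
        intro x hx
        have hxc : x ∉ splitOf g v u := (not_mem_splitOf_iff hg h.symm).mpr hx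
        exact side_helper hg.2.1 hg.1 h.symm h' h1 h3 _ hxc
      · -- S ∩ S' = ∅
        refine Or.inr (Or.inr (Or.inl ?_))
        ext x
        simp only [Set.mem_inter_iff, Set.mem_empty_iff_false, iff_false, not_and]
        intro hx hx'
        have hxc : x ∉ splitOf g v u := (not_mem_splitOf_iff hg h.symm).mpr hx
        have := side_helper hg.2.1 hg.1 h.symm h'.symm h2 h3 _ hxc
        exact svert_disjoint hg.2.1 h' hx' this


/-- F2: a separating split yields the quartet topology -/
lemma quartetSplit_of_split (hg : IsPhylo g) {u v : L ⊕ I} (h : g.Adj u v) {a b c d : L}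
    (ha : a ∈ splitOf g u v) (hb : b ∈ splitOf g u v)
    (hc : c ∈ splitOf g v u) (hd : d ∈ splitOf g v u) : quartetSplit g a b c d := by
  classical
  obtain ⟨Wab⟩ := (ha.trans hb.symm :
    (g.deleteEdges {s(u, v)}).Reachable (Sum.inl a) (Sum.inl b))
  obtain ⟨Wcd⟩ := (hc.trans hd.symm :
    (g.deleteEdges {s(v, u)}).Reachable (Sum.inl c) (Sum.inl d))
  let P := Wab.toPath
  let Q := Wcd.toPath
  have hPsub : ∀ t ∈ P.1.support, t ∈ Svert g u v := fun t ht =>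
    support_subset_side Wab hb t (Walk.support_toPath_subset Wab ht)
  have hQsub : ∀ t ∈ Q.1.support, t ∈ Svert g v u := fun t ht =>
    support_subset_side Wcd hd t (Walk.support_toPath_subset Wcd ht)
  have hPe : ∀ e ∈ P.1.edges, e ∈ g.edgeSet := fun e he =>
    edgeSet_mono (deleteEdges_le _) (P.1.edges_subset_edgeSet he)
  have hQe : ∀ e ∈ Q.1.edges, e ∈ g.edgeSet := fun e he =>
    edgeSet_mono (deleteEdges_le _) (Q.1.edges_subset_edgeSet he)
  refine ⟨⟨P.1.transfer g hPe, P.2.transfer hPe⟩, ⟨Q.1.transfer g hQe, Q.2.transfer hQe⟩, ?_⟩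
  intro t ht ht'
  rw [Walk.support_transfer] at ht ht'
  exact svert_disjoint hg.2.1 h (hPsub t ht) (hQsub t ht')

/-- F2': the quartet topology yields a separating split -/
lemma split_of_quartetSplit (hg : IsPhylo g) {a b c d : L} (hq : quartetSplit g a b c d) :
    ∃ m m' : L ⊕ I, g.Adj m m' ∧ a ∈ splitOf g m m' ∧ b ∈ splitOf g m m' ∧
      c ∈ splitOf g m' m ∧ d ∈ splitOf g m' m := by
  classical
  obtain ⟨p, q, hdisj⟩ := hq
  have hcp : (Sum.inl c : L ⊕ I) ∉ {t | t ∈ p.1.support} := fun hcp =>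
    hdisj _ hcp (Walk.start_mem_support _)
  obtain ⟨W0⟩ := hg.1 (Sum.inl c) (Sum.inl a)
  obtain ⟨m', m, Wc, hadj, hm', hm, hWc⟩ :=
    frontier (S := {t | t ∈ p.1.support}) W0 hcp (Walk.start_mem_support _)
  have hm'p : m' ∉ p.1.support := hm'
  have hmp : m ∈ p.1.support := hm
  refine ⟨m, m', hadj.symm, ?_, ?_, ?_, ?_⟩
  · -- a
    refine reach_of_walk_avoid (p.1.takeUntil m hmp) ?_
    intro he
    exact hm'p (Walk.support_takeUntil_subset _ hmp
      ((p.1.takeUntil m hmp).snd_mem_support_of_mem_edges he))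
  · -- b
    have hmp' : m ∈ p.1.reverse.support := by
      rw [Walk.support_reverse]; exact List.mem_reverse.mpr hmp
    refine reach_of_walk_avoid (p.1.reverse.takeUntil m hmp') ?_
    intro he
    have := Walk.support_takeUntil_subset _ hmp'
      ((p.1.reverse.takeUntil m hmp').snd_mem_support_of_mem_edges he)
    rw [Walk.support_reverse] at this
    exact hm'p (List.mem_reverse.mp this)
  · -- c
    refine reach_of_walk_avoid Wc ?_
    intro he
    exact (hWc m (Wc.snd_mem_support_of_mem_edges he)) hmp
  · -- d
    have hmq : m ∉ q.1.support := hdisj m hmp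
    refine reach_of_walk_avoid (q.1.reverse.append Wc) ?_
    intro he
    rw [Walk.edges_append] at he
    rcases List.mem_append.mp he with he | he
    · apply hmq
      have := q.1.reverse.snd_mem_support_of_mem_edges he
      rw [Walk.support_reverse] at this
      exact List.mem_reverse.mp this
    · exact (hWc m (Wc.snd_mem_support_of_mem_edges he)) hmp

/-- U': a separating split rules out crossing quartet topologies -/
lemma not_quartetSplit_of_split (hg : IsPhylo g) {m m' : L ⊕ I} (h : g.Adj m m')
    {x y z w : L} (hx : x ∈ splitOf g m m') (hy : y ∈ splitOf g m m')
    (hz : z ∈ splitOf g m' m) (hw : w ∈ splitOf g m' m) :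
    ¬ quartetSplit g x z y w := by
  rintro ⟨p, q, hdisj⟩
  have h1 := crossing hg.2.1 h p.1 hx hz
  have h2 := crossing hg.2.1 h q.1 hy hw
  exact hdisj m h1.1 h2.1


lemma singleton_mem_splits (hg : IsPhylo g) (x : L) : {x} ∈ splits g := by
  obtain ⟨v, hv⟩ := leaf_nbr hg x
  have hadj : g.Adj (Sum.inl x) v := adj_of_mem_nbr (by rw [hv]; simp)
  exact ⟨Sum.inl x, v, hadj, (splitOf_leaf_eq hg hadj).symm⟩

/-- existence of a separating split among the splits "between" A1 and A2 -/
lemma blocks_exist [Fintype L] [Fintype I] {T' : SimpleGraph (L ⊕ I)} (hT' : IsPhylo T')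
    {A1 A2 : Set L} (hA1 : A1 ∈ splits T') (hA2 : A2 ∈ splits T') (hd : A1 ∩ A2 = ∅)
    (hA1ne : A1.Nonempty) (hA2ne : A2.Nonempty) (hBne : ((A1 ∪ A2)ᶜ).Nonempty)
    (hout : A1 ∪ A2 ∉ splits T') :
    ∃ S1 ∈ splits T', A1 ⊆ S1 ∧ A2 ∩ S1 = ∅ ∧
      ∃ b b', b ∈ (A1 ∪ A2)ᶜ ∩ S1 ∧ b' ∈ (A1 ∪ A2)ᶜ \ S1 := by
  classical
  set B : Set L := (A1 ∪ A2)ᶜ with hB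
  by_contra hcon
  push_neg at hcon
  -- classification of splits between A1 and A2
  have hclass : ∀ S, S ∈ splits T' → A1 ⊆ S → A2 ∩ S = ∅ → S = A1 ∨ S = A2ᶜ := by
    intro S hS hsub hint
    have hnosep := hcon S hS hsub hint
    by_cases hBS : (B ∩ S).Nonempty
    · right
      have hBsub : B ⊆ S := by
        intro b hb
        by_contra hbS
        obtain ⟨b0, hb0⟩ := hBS
        exact (hnosep b0 b hb0) ⟨hb, hbS⟩
      apply Set.eq_of_subset_of_subset
      · intro x hx hx2
        exact (Set.ext_iff.mp hint x).mp ⟨hx2, hx⟩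
      · intro x hx
        by_cases hx1 : x ∈ A1
        · exact hsub hx1
        · by_cases hx2 : x ∈ A2
          · exact absurd hx2 hx
          · exact hBsub (by simp [hB, hx1, hx2])
    · left
      apply Set.eq_of_subset_of_subset
      · intro x hx
        by_cases hx1 : x ∈ A1
        · exact hx1
        · exfalso
          by_cases hx2 : x ∈ A2
          · exact (Set.ext_iff.mp hint x).mp ⟨hx2, hx⟩
          · exact hBS ⟨x, by simp [hB, hx1, hx2], hx⟩
      · exact hsub
  -- unpack the split A1 and decompose at the far end of its edge
  obtain ⟨u1, v1, hadj1, hA1eq⟩ := hA1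
  have hA1c : splitOf T' v1 u1 = A1ᶜ := by rw [hA1eq]; exact splitOf_compl hT' hadj1
  obtain ⟨i, rfl⟩ : ∃ i : I, v1 = Sum.inr i := by
    cases v1 with
    | inl x =>
      exfalso
      have h1 : splitOf T' (Sum.inl x) u1 = {x} := splitOf_leaf_eq hT' hadj1.symm
      rw [h1] at hA1c
      obtain ⟨a2, ha2⟩ := hA2ne
      obtain ⟨b0, hb0⟩ := hBne
      have ha2' : a2 ∈ A1ᶜ := fun hc => (Set.ext_iff.mp hd a2).mp ⟨hc, ha2⟩
      have hb0' : b0 ∈ A1ᶜ := fun hc => hb0 (Or.inl hc)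
      rw [← hA1c, Set.mem_singleton_iff] at ha2' hb0'
      apply hb0
      right
      rw [hb0', ← ha2']
      exact ha2
    | inr i => exact ⟨i, rfl⟩
  obtain ⟨z1, z2, hz12, hz1u, hz2u, hnb⟩ := int_nbrs hT' hadj1.symm
  obtain ⟨hdecu, hdeci⟩ := splitOf_decomp hT' hnb hz12 hz1u hz2u hadj1.symm
  set C1 : Set L := splitOf T' z1 (Sum.inr i) with hC1def
  set C2 : Set L := splitOf T' z2 (Sum.inr i) with hC2def
  have hz1adj : T'.Adj (Sum.inr i) z1 := adj_of_mem_nbr (by rw [hnb]; simp)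
  have hz2adj : T'.Adj (Sum.inr i) z2 := adj_of_mem_nbr (by rw [hnb]; simp)
  have hC1mem : C1 ∈ splits T' := ⟨z1, Sum.inr i, hz1adj.symm, rfl⟩
  have hC2mem : C2 ∈ splits T' := ⟨z2, Sum.inr i, hz2adj.symm, rfl⟩
  have hC1ne : C1.Nonempty := splitOf_nonempty hT' hz1adj.symm
  have hC2ne : C2.Nonempty := splitOf_nonempty hT' hz2adj.symm
  have hCU : C1 ∪ C2 = A1ᶜ := by rw [← hA1c]; exact hdecu.symm
  -- the key symmetric case
  have keycase : ∀ D1 D2 : Set L, D1 ∈ splits T' → D2 ∈ splits T' → D1 ∪ D2 = A1ᶜ →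
      D1 ∩ D2 = ∅ → D2.Nonempty → A2 ⊆ D1 → False := by
    intro D1 D2 hD1 hD2 hU hI hD2ne hsub
    have hD1c : D1ᶜ ∈ splits T' := splits_compl hT' hD1
    have hA1D1 : A1 ⊆ D1ᶜ := by
      intro x hx hxD
      exact (Set.ext_iff.mp hU x).mp (Or.inl hxD) hx
    have hA2D1 : A2 ∩ D1ᶜ = ∅ := by
      ext x
      simp only [Set.mem_inter_iff, Set.mem_empty_iff_false, iff_false, not_and,
        Set.mem_compl_iff, not_not]
      intro hx
      exact hsub hx
    rcases hclass D1ᶜ hD1c hA1D1 hA2D1 with hE | hE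
    · -- D1 = A1ᶜ, contradicting D2 nonempty
      have hD1A : D1 = A1ᶜ := by rw [← compl_compl D1, hE]
      obtain ⟨x, hx⟩ := hD2ne
      have hx1 : x ∈ A1ᶜ := (Set.ext_iff.mp hU x).mp (Or.inr hx)
      rw [← hD1A] at hx1
      exact (Set.ext_iff.mp hI x).mp ⟨hx1, hx⟩
    · -- D1 = A2, so D2 = B and A1 ∪ A2 is a split
      have hD1A2 : D1 = A2 := by
        have := congrArg compl hE
        rwa [compl_compl, compl_compl] at this
      have hD2B : D2 = B := by
        ext x
        rw [hB, Set.mem_compl_iff, Set.mem_union]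
        constructor
        · intro hx
          have hxA1 : x ∈ A1ᶜ := (Set.ext_iff.mp hU x).mp (Or.inr hx)
          have hxD1 : x ∉ D1 := fun hc => (Set.ext_iff.mp hI x).mp ⟨hc, hx⟩
          rintro (hmem | hmem)
          · exact hxA1 hmem
          · rw [← hD1A2] at hmem
            exact hxD1 hmem
        · intro hx
          push_neg at hx
          have hxA1 : x ∈ A1ᶜ := hx.1
          rcases (Set.ext_iff.mp hU x).mpr hxA1 with hc | hc
          · rw [hD1A2] at hc
            exact absurd hc hx.2
          · exact hc
      apply hout
      have hAA : A1 ∪ A2 = D2ᶜ := by rw [hD2B, hB, compl_compl]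
      rw [hAA]
      exact splits_compl hT' hD2
  by_cases hsub1 : A2 ⊆ C1
  · exact keycase C1 C2 hC1mem hC2mem hCU hdeci hC2ne hsub1
  · by_cases hsub2 : A2 ⊆ C2
    · refine keycase C2 C1 hC2mem hC1mem ?_ ?_ hC1ne hsub2
      · rw [← hCU]; exact Set.union_comm _ _
      · rw [← hdeci]; exact Set.inter_comm _ _
    · -- A2 meets both C1 and C2; compatibility forces C1, C2 ⊆ A2, absurd
      obtain ⟨p1, hp1⟩ := Set.not_subset.mp hsub1
      obtain ⟨p2, hp2⟩ := Set.not_subset.mp hsub2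
      have hA2C : ∀ x ∈ A2, x ∈ C1 ∪ C2 := by
        intro x hx
        rw [hCU]
        intro hc
        exact (Set.ext_iff.mp hd x).mp ⟨hc, hx⟩
      have hp1C2 : p1 ∈ C2 := (hA2C p1 hp1.1).resolve_left hp1.2
      have hp2C1 : p2 ∈ C1 := (hA2C p2 hp2.1).resolve_right hp2.2
      have hCsub : ∀ Ci : Set L, Ci ∈ splits T' → Ci ⊆ A1ᶜ → ¬ A2 ⊆ Ci →
          (∃ q, q ∈ A2 ∧ q ∈ Ci) → Ci ⊆ A2 := by
        intro Ci hCi hCiA1 hnsub hq1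
        rcases splits_compatible hT' hCi hA2 with h | h | h | h
        · exact h
        · exact absurd h hnsub
        · obtain ⟨q, hq, hqc⟩ := hq1
          exact absurd ((Set.ext_iff.mp h q).mp ⟨hqc, hq⟩) id
        · exfalso
          obtain ⟨a1, ha1⟩ := hA1ne
          have ha1c : a1 ∈ Ci ∪ A2 := by rw [h]; trivial
          rcases ha1c with hc | hc
          · exact hCiA1 hc ha1
          · exact (Set.ext_iff.mp hd a1).mp ⟨ha1, hc⟩
      have hC1A1 : C1 ⊆ A1ᶜ := fun x hx => (Set.ext_iff.mp hCU x).mp (Or.inl hx)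
      have hC2A1 : C2 ⊆ A1ᶜ := fun x hx => (Set.ext_iff.mp hCU x).mp (Or.inr hx)
      have h1 := hCsub C1 hC1mem hC1A1 hsub1 ⟨p2, hp2.1, hp2C1⟩
      have h2 := hCsub C2 hC2mem hC2A1 hsub2 ⟨p1, hp1.1, hp1C2⟩
      obtain ⟨b0, hb0⟩ := hBne
      have hb0A1 : b0 ∈ A1ᶜ := fun hc => hb0 (Or.inl hc)
      rw [← hCU] at hb0A1
      rcases hb0A1 with hc | hc
      · exact hb0 (Or.inr (h1 hc))
      · exact hb0 (Or.inr (h2 hc))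


lemma core [Fintype L] [Fintype I] {T T' : SimpleGraph (L ⊕ I)} (hT : IsPhylo T)
    (hT' : IsPhylo T') {S₀ : Set L} (hin : S₀ ∈ splits T) (hout : S₀ ∉ splits T')
    (hmin : ∀ S : Set L, ((S ∈ splits T ∧ S ∉ splits T') ∨ (S ∈ splits T' ∧ S ∉ splits T)) →
      S₀.ncard ≤ S.ncard) :
    ∃ A1 A2 C D : Set L, A1.Nonempty ∧ A2.Nonempty ∧ C.Nonempty ∧ D.Nonempty ∧
      A1 ∩ A2 = ∅ ∧ C ∩ D = ∅ ∧ A1 ∪ A2 = S₀ ∧ C ∪ D = S₀ᶜ ∧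
      ∀ a1 ∈ A1, ∀ a2 ∈ A2, ∀ b ∈ C, ∀ b' ∈ D,
        (quartetSplit T a1 a2 b b' ∧ ¬ quartetSplit T' a1 a2 b b') ∧
        (quartetSplit T' a1 b a2 b' ∧ ¬ quartetSplit T a1 b a2 b') := by
  classical
  obtain ⟨u, v, hadjT, hS₀eq⟩ := id hin
  -- S₀ is not a singleton
  have hnotsing : ∀ x : L, S₀ ≠ {x} := by
    intro x hx
    exact hout (hx ▸ singleton_mem_splits hT' x)
  -- u is internal
  obtain ⟨i, rfl⟩ : ∃ i : I, u = Sum.inr i := by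
    cases u with
    | inl x => exact absurd (hS₀eq.trans (splitOf_leaf_eq hT hadjT)) (hnotsing x)
    | inr i => exact ⟨i, rfl⟩
  obtain ⟨w1, w2, hw12, hw1v, hw2v, hnb⟩ := int_nbrs hT hadjT
  obtain ⟨hdecu, hdeci⟩ := splitOf_decomp hT hnb hw12 hw1v hw2v hadjT
  set A1 : Set L := splitOf T w1 (Sum.inr i) with hA1def
  set A2 : Set L := splitOf T w2 (Sum.inr i) with hA2def
  have hw1adj : T.Adj (Sum.inr i) w1 := adj_of_mem_nbr (by rw [hnb]; simp)
  have hw2adj : T.Adj (Sum.inr i) w2 := adj_of_mem_nbr (by rw [hnb]; simp)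
  have hA1memT : A1 ∈ splits T := ⟨w1, Sum.inr i, hw1adj.symm, rfl⟩
  have hA2memT : A2 ∈ splits T := ⟨w2, Sum.inr i, hw2adj.symm, rfl⟩
  have hA1ne : A1.Nonempty := splitOf_nonempty hT hw1adj.symm
  have hA2ne : A2.Nonempty := splitOf_nonempty hT hw2adj.symm
  have hU : A1 ∪ A2 = S₀ := by rw [hS₀eq]; exact hdecu.symm
  -- both A1, A2 are splits of T' by minimality
  have hmemT' : ∀ Aj : Set L, Aj ∈ splits T → Aj ∪ (S₀ \ Aj) = S₀ → Aj.Nonempty →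
      (S₀ \ Aj).Nonempty → Aj ∈ splits T' := by
    intro Aj hAj hU hne hne'
    by_contra hAj'
    have hlt : Aj.ncard < S₀.ncard := by
      apply Set.ncard_lt_ncard _ (Set.toFinite _)
      constructor
      · intro x hx
        rw [← hU]
        exact Or.inl hx
      · intro hsup
        obtain ⟨y, hy⟩ := hne'
        exact hy.2 (hsup (by rw [← hU]; exact Or.inr hy))
    have := hmin Aj (Or.inl ⟨hAj, hAj'⟩)
    omega
  have hsd1 : A1 ∪ (S₀ \ A1) = S₀ := by
    apply Set.union_diff_cancel
    rw [← hU]; exact Set.subset_union_left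
  have hsd2 : A2 ∪ (S₀ \ A2) = S₀ := by
    apply Set.union_diff_cancel
    rw [← hU]; exact Set.subset_union_right
  have hd1ne : (S₀ \ A1).Nonempty := by
    obtain ⟨a2, ha2⟩ := hA2ne
    exact ⟨a2, by rw [← hU]; exact Or.inr ha2, fun hc =>
      (Set.ext_iff.mp hdeci a2).mp ⟨hc, ha2⟩⟩
  have hd2ne : (S₀ \ A2).Nonempty := by
    obtain ⟨a1, ha1⟩ := hA1ne
    exact ⟨a1, by rw [← hU]; exact Or.inl ha1, fun hc =>
      (Set.ext_iff.mp hdeci a1).mp ⟨ha1, hc⟩⟩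
  have hA1memT' : A1 ∈ splits T' := hmemT' A1 hA1memT hsd1 hA1ne hd1ne
  have hA2memT' : A2 ∈ splits T' := hmemT' A2 hA2memT hsd2 hA2ne hd2ne
  -- the complement is nonempty
  have hScompl : S₀ᶜ ∈ splits T ∧ S₀ᶜ ∉ splits T' := by
    refine ⟨splits_compl hT hin, fun hc => hout ?_⟩
    have := splits_compl hT' hc
    rwa [compl_compl] at this
  have hBne : ((A1 ∪ A2)ᶜ).Nonempty := by
    rw [hU]
    have h2 : 2 ≤ S₀.ncard := by
      obtain ⟨x0, hx0⟩ := splitOf_nonempty hT hadjT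
      rw [← hS₀eq] at hx0
      rcases Nat.lt_or_ge S₀.ncard 2 with hlt | hge
      · exfalso
        have h1 : S₀.ncard = 1 := by
          have := Set.ncard_pos (Set.toFinite S₀) |>.mpr ⟨x0, hx0⟩
          omega
        obtain ⟨y, hy⟩ := Set.ncard_eq_one.mp h1
        exact hnotsing y hy
      · exact hge
    have hle := hmin S₀ᶜ (Or.inl hScompl)
    have : S₀ᶜ.ncard ≠ 0 := by omega
    exact Set.nonempty_of_ncard_ne_zero this
  obtain ⟨S1, hS1mem, hS1A1, hS1A2, b0, b0', hb0, hb0'⟩ :=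
    blocks_exist hT' hA1memT' hA2memT' hdeci hA1ne hA2ne hBne (by rw [hU]; exact hout)
  set B : Set L := S₀ᶜ with hBdef
  have hBAB : (A1 ∪ A2)ᶜ = B := by rw [hU]
  refine ⟨A1, A2, B ∩ S1, B \ S1, hA1ne, hA2ne,
    ⟨b0, hBAB ▸ hb0⟩, ⟨b0', hBAB ▸ hb0'⟩, hdeci, ?_, hU, ?_, ?_⟩
  · ext x
    simp only [Set.mem_inter_iff, Set.mem_diff, Set.mem_empty_iff_false, iff_false, not_and]
    tauto
  · ext x
    simp only [Set.mem_union, Set.mem_inter_iff, Set.mem_diff]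
    tauto
  · -- the quartet topologies
    intro a1 ha1 a2 ha2 b hb b' hb'
    obtain ⟨m, m', hadjT', hS1eq⟩ := hS1mem
    -- memberships w.r.t. the split S₀ of T
    have ha1S : a1 ∈ splitOf T (Sum.inr i) v := by rw [← hS₀eq, ← hU]; exact Or.inl ha1
    have ha2S : a2 ∈ splitOf T (Sum.inr i) v := by rw [← hS₀eq, ← hU]; exact Or.inr ha2
    have hbS : b ∈ splitOf T v (Sum.inr i) := by
      rw [← not_mem_splitOf_iff hT hadjT, ← hS₀eq]
      exact hb.1
    have hbS' : b' ∈ splitOf T v (Sum.inr i) := by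
      rw [← not_mem_splitOf_iff hT hadjT, ← hS₀eq]
      exact hb'.1
    -- memberships w.r.t. the split S1 of T'
    have ha1S1 : a1 ∈ splitOf T' m m' := by rw [← hS1eq]; exact hS1A1 ha1
    have hbS1 : b ∈ splitOf T' m m' := by rw [← hS1eq]; exact hb.2
    have ha2S1 : a2 ∈ splitOf T' m' m := by
      rw [← not_mem_splitOf_iff hT' hadjT', ← hS1eq]
      exact fun hc => (Set.ext_iff.mp hS1A2 a2).mp ⟨ha2, hc⟩
    have hbS1' : b' ∈ splitOf T' m' m := by
      rw [← not_mem_splitOf_iff hT' hadjT', ← hS1eq]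
      exact hb'.2
    exact ⟨⟨quartetSplit_of_split hT hadjT ha1S ha2S hbS hbS',
        not_quartetSplit_of_split hT' hadjT' ha1S1 hbS1 ha2S1 hbS1'⟩,
      ⟨quartetSplit_of_split hT' hadjT' ha1S1 hbS1 ha2S1 hbS1',
        not_quartetSplit_of_split hT hadjT ha1S ha2S hbS hbS'⟩⟩


lemma nat_helper {a b : ℕ} (ha : 1 ≤ a) (hb : 1 ≤ b) : a + b - 1 ≤ a * b := by
  cases a with
  | zero => omega
  | succ a =>
    cases b with
    | zero => omega
    | succ b =>
      have : (a + 1) * (b + 1) = a * b + a + b + 1 := by ring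
      omega

end QD

namespace QD

lemma count_lemma {L I : Type} [Fintype L] [DecidableEq L] {g g' : SimpleGraph (L ⊕ I)}
    {A1 A2 C D : Set L} (h1 : A1.Nonempty) (h2 : A2.Nonempty) (h3 : C.Nonempty)
    (h4 : D.Nonempty) (hI12 : A1 ∩ A2 = ∅) (hICD : C ∩ D = ∅)
    (hcompl : C ∪ D = (A1 ∪ A2)ᶜ)
    (hq : ∀ a1 ∈ A1, ∀ a2 ∈ A2, ∀ b ∈ C, ∀ b' ∈ D, ∃ a b2 c d : L,
      ({a1, a2, b, b'} : Finset L) = {a, b2, c, d} ∧ quartetSplit g a b2 c d ∧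
        ¬ quartetSplit g' a b2 c d) :
    Fintype.card L - 3 ≤ dQ g g' := by
  classical
  set F1 := (Set.toFinite A1).toFinset with hF1
  set F2 := (Set.toFinite A2).toFinset with hF2
  set F3 := (Set.toFinite C).toFinset with hF3
  set F4 := (Set.toFinite D).toFinset with hF4
  have hm1 : ∀ x, x ∈ F1 ↔ x ∈ A1 := fun x => Set.Finite.mem_toFinset _
  have hm2 : ∀ x, x ∈ F2 ↔ x ∈ A2 := fun x => Set.Finite.mem_toFinset _
  have hm3 : ∀ x, x ∈ F3 ↔ x ∈ C := fun x => Set.Finite.mem_toFinset _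
  have hm4 : ∀ x, x ∈ F4 ↔ x ∈ D := fun x => Set.Finite.mem_toFinset _
  have hAC : ∀ x, x ∈ A1 ∪ A2 → ∀ y, y ∈ C ∪ D → x ≠ y := by
    rintro x hx y hy rfl
    have : x ∈ (A1 ∪ A2)ᶜ := by rw [← hcompl]; exact hy
    exact this hx
  have hne12 : ∀ x ∈ A1, ∀ y ∈ A2, x ≠ y := by
    rintro x hx y hy rfl
    exact (Set.ext_iff.mp hI12 x).mp ⟨hx, hy⟩
  have hne34 : ∀ x ∈ C, ∀ y ∈ D, x ≠ y := by
    rintro x hx y hy rfl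
    exact (Set.ext_iff.mp hICD x).mp ⟨hx, hy⟩
  set f : (L × L) × (L × L) → Finset L := fun p => {p.1.1, p.1.2, p.2.1, p.2.2} with hf
  set P := (F1 ×ˢ F2) ×ˢ (F3 ×ˢ F4) with hP
  have hmemP : ∀ p : (L × L) × (L × L), p ∈ P ↔
      (p.1.1 ∈ A1 ∧ p.1.2 ∈ A2 ∧ p.2.1 ∈ C ∧ p.2.2 ∈ D) := by
    intro p
    simp only [hP, Finset.mem_product, hm1, hm2, hm3, hm4]
    tauto
  have coord : ∀ r : (L × L) × (L × L),
      (r.1.1 ∈ A1 ∧ r.1.2 ∈ A2 ∧ r.2.1 ∈ C ∧ r.2.2 ∈ D) → ∀ x, x ∈ f r →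
      (x ∈ A1 → x = r.1.1) ∧ (x ∈ A2 → x = r.1.2) ∧
        (x ∈ C → x = r.2.1) ∧ (x ∈ D → x = r.2.2) := by
    intro r hr x hx
    simp only [hf, Finset.mem_insert, Finset.mem_singleton] at hx
    obtain ⟨hr1, hr2, hr3, hr4⟩ := hr
    refine ⟨?_, ?_, ?_, ?_⟩ <;> intro hxm
    · rcases hx with h | h | h | h
      · exact h
      · exact absurd h (hne12 x hxm _ hr2)
      · exact absurd h (hAC x (Or.inl hxm) _ (Or.inl hr3))
      · exact absurd h (hAC x (Or.inl hxm) _ (Or.inr hr4))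
    · rcases hx with h | h | h | h
      · exact absurd h.symm (hne12 _ hr1 x hxm)
      · exact h
      · exact absurd h (hAC x (Or.inr hxm) _ (Or.inl hr3))
      · exact absurd h (hAC x (Or.inr hxm) _ (Or.inr hr4))
    · rcases hx with h | h | h | h
      · exact absurd h.symm (hAC _ (Or.inl hr1) x (Or.inl hxm))
      · exact absurd h.symm (hAC _ (Or.inr hr2) x (Or.inl hxm))
      · exact h
      · exact absurd h (hne34 x hxm _ hr4)
    · rcases hx with h | h | h | h
      · exact absurd h.symm (hAC _ (Or.inl hr1) x (Or.inr hxm))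
      · exact absurd h.symm (hAC _ (Or.inr hr2) x (Or.inr hxm))
      · exact absurd h.symm (hne34 _ hr3 x hxm)
      · exact h
  have hinj : Set.InjOn f ↑P := by
    intro p hp q hq heq
    rw [Finset.mem_coe, hmemP] at hp hq
    have m11 : q.1.1 ∈ f p := by rw [heq]; simp [hf]
    have m12 : q.1.2 ∈ f p := by rw [heq]; simp [hf]
    have m21 : q.2.1 ∈ f p := by rw [heq]; simp [hf]
    have m22 : q.2.2 ∈ f p := by rw [heq]; simp [hf]
    have e11 := ((coord p hp q.1.1 m11).1 hq.1).symm
    have e12 := ((coord p hp q.1.2 m12).2.1 hq.2.1).symm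
    have e21 := ((coord p hp q.2.1 m21).2.2.1 hq.2.2.1).symm
    have e22 := ((coord p hp q.2.2 m22).2.2.2 hq.2.2.2).symm
    exact Prod.ext (Prod.ext e11 e12) (Prod.ext e21 e22)
  have hsub : ↑(P.image f) ⊆ {s : Finset L | s.card = 4 ∧
      ∃ a b c d : L, s = ({a, b, c, d} : Finset L) ∧ quartetSplit g a b c d ∧
        ¬ quartetSplit g' a b c d} := by
    intro s hs
    rw [Finset.mem_coe, Finset.mem_image] at hs
    obtain ⟨p, hpP, rfl⟩ := hs
    rw [hmemP] at hpP
    obtain ⟨hp1, hp2, hp3, hp4⟩ := hpP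
    have d1 : p.1.1 ≠ p.1.2 := hne12 _ hp1 _ hp2
    have d2 : p.1.1 ≠ p.2.1 := hAC _ (Or.inl hp1) _ (Or.inl hp3)
    have d3 : p.1.1 ≠ p.2.2 := hAC _ (Or.inl hp1) _ (Or.inr hp4)
    have d4 : p.1.2 ≠ p.2.1 := hAC _ (Or.inr hp2) _ (Or.inl hp3)
    have d5 : p.1.2 ≠ p.2.2 := hAC _ (Or.inr hp2) _ (Or.inr hp4)
    have d6 : p.2.1 ≠ p.2.2 := hne34 _ hp3 _ hp4
    obtain ⟨a, b2, c, d, heqs, hq1, hq2⟩ :=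
      hq p.1.1 hp1 p.1.2 hp2 p.2.1 hp3 p.2.2 hp4
    refine ⟨?_, a, b2, c, d, heqs, hq1, hq2⟩
    show (f p).card = 4
    rw [hf]
    rw [Finset.card_insert_of_notMem (by simp [d1, d2, d3]),
      Finset.card_insert_of_notMem (by simp [d4, d5]),
      Finset.card_insert_of_notMem (by simp [d6]), Finset.card_singleton]
  have hchain : (P.image f).card ≤ dQ g g' := by
    have := Set.ncard_le_ncard hsub (Set.toFinite _)
    rwa [Set.ncard_coe_finset] at this
  have hcardP : (P.image f).card = F1.card * F2.card * (F3.card * F4.card) := by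
    rw [Finset.card_image_of_injOn hinj, hP, Finset.card_product, Finset.card_product,
      Finset.card_product]
  -- sizes
  obtain ⟨x1, hx1⟩ := h1
  obtain ⟨x2, hx2⟩ := h2
  obtain ⟨x3, hx3⟩ := h3
  obtain ⟨x4, hx4⟩ := h4
  have hp1 : 1 ≤ F1.card := Finset.card_pos.mpr ⟨x1, (hm1 x1).mpr hx1⟩
  have hp2 : 1 ≤ F2.card := Finset.card_pos.mpr ⟨x2, (hm2 x2).mpr hx2⟩
  have hp3 : 1 ≤ F3.card := Finset.card_pos.mpr ⟨x3, (hm3 x3).mpr hx3⟩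
  have hp4 : 1 ≤ F4.card := Finset.card_pos.mpr ⟨x4, (hm4 x4).mpr hx4⟩
  have hd12 : Disjoint F1 F2 := Finset.disjoint_left.mpr
    (fun hxa hxb => fun hyc => (hne12 _ ((hm1 _).mp hxb) _ ((hm2 _).mp hyc) rfl).elim)
  have hd34 : Disjoint F3 F4 := Finset.disjoint_left.mpr
    (fun hxa hxb => fun hyc => (hne34 _ ((hm3 _).mp hxb) _ ((hm4 _).mp hyc) rfl).elim)
  have hd1234 : Disjoint (F1 ∪ F2) (F3 ∪ F4) := by
    rw [Finset.disjoint_left]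
    intro a ha hb
    rw [Finset.mem_union] at ha hb
    refine hAC a ?_ a ?_ rfl
    · rcases ha with h | h
      · exact Or.inl ((hm1 _).mp h)
      · exact Or.inr ((hm2 _).mp h)
    · rcases hb with h | h
      · exact Or.inl ((hm3 _).mp h)
      · exact Or.inr ((hm4 _).mp h)
  have huniv : (F1 ∪ F2) ∪ (F3 ∪ F4) = Finset.univ := by
    ext a
    simp only [Finset.mem_union, Finset.mem_univ, iff_true, hm1, hm2, hm3, hm4]
    rcases Classical.em (a ∈ A1 ∪ A2) with h | h
    · rcases h with h | h
      · exact Or.inl (Or.inl h)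
      · exact Or.inl (Or.inr h)
    · have : a ∈ C ∪ D := by rw [hcompl]; exact h
      rcases this with h | h
      · exact Or.inr (Or.inl h)
      · exact Or.inr (Or.inr h)
  have hsum : F1.card + F2.card + (F3.card + F4.card) = Fintype.card L := by
    rw [← Finset.card_union_of_disjoint hd12, ← Finset.card_union_of_disjoint hd34,
      ← Finset.card_union_of_disjoint hd1234, huniv, Finset.card_univ]
  -- arithmetic
  have q1 : F1.card + F2.card - 1 ≤ F1.card * F2.card := nat_helper hp1 hp2
  have q2 : F3.card + F4.card - 1 ≤ F3.card * F4.card := nat_helper hp3 hp4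
  have q3 : (F1.card + F2.card - 1) * (F3.card + F4.card - 1) ≤
      F1.card * F2.card * (F3.card * F4.card) := Nat.mul_le_mul q1 q2
  have q4 : (F1.card + F2.card - 1) + (F3.card + F4.card - 1) - 1 ≤
      (F1.card + F2.card - 1) * (F3.card + F4.card - 1) :=
    nat_helper (by omega) (by omega)
  have q5 : Fintype.card L - 3 =
      (F1.card + F2.card - 1) + (F3.card + F4.card - 1) - 1 := by omega
  rw [q5]
  calc (F1.card + F2.card - 1) + (F3.card + F4.card - 1) - 1
      ≤ (F1.card + F2.card - 1) * (F3.card + F4.card - 1) := q4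
    _ ≤ F1.card * F2.card * (F3.card * F4.card) := q3
    _ = (P.image f).card := hcardP.symm
    _ ≤ dQ g g' := hchain

end QD

/-- Distinct unrooted binary trees on the same set of
`n ≥ 4` leaves have quartet distance at least `n - 3`. -/
theorem quartet_distance_lower_bound {L I : Type} [Fintype L] [DecidableEq L]
    [Fintype I] (g g' : SimpleGraph (L ⊕ I)) (hg : IsPhylo g) (hg' : IsPhylo g')
    (hn : 4 ≤ Fintype.card L) (hdistinct : splits g ≠ splits g') :
    Fintype.card L - 3 ≤ dQ g g' := by
  classical
  have hΔ : ∃ S : Set L,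
      (S ∈ splits g ∧ S ∉ splits g') ∨ (S ∈ splits g' ∧ S ∉ splits g) := by
    by_contra hcon
    push_neg at hcon
    apply hdistinct
    ext S
    constructor <;> intro h <;> (have := hcon S; tauto)
  obtain ⟨S', hS'⟩ := hΔ
  have hKne : ({k | ∃ S : Set L, ((S ∈ splits g ∧ S ∉ splits g') ∨
      (S ∈ splits g' ∧ S ∉ splits g)) ∧ S.ncard = k} : Set ℕ).Nonempty :=
    ⟨S'.ncard, S', hS', rfl⟩
  obtain ⟨S₀, hS₀diff, hS₀card⟩ := Nat.sInf_mem hKne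
  have hmin : ∀ S : Set L, ((S ∈ splits g ∧ S ∉ splits g') ∨
      (S ∈ splits g' ∧ S ∉ splits g)) → S₀.ncard ≤ S.ncard := by
    intro S hS
    rw [hS₀card]
    exact Nat.sInf_le ⟨S, hS, rfl⟩
  rcases hS₀diff with ⟨hin, hout⟩ | ⟨hin, hout⟩
  · obtain ⟨A1, A2, C, D, n1, n2, n3, n4, i12, i34, hU, hUc, hprop⟩ :=
      QD.core hg hg' hin hout hmin
    refine QD.count_lemma n1 n2 n3 n4 i12 i34 (by rw [hU]; exact hUc) ?_
    intro a1 ha1 a2 ha2 b hb b' hb'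
    obtain ⟨⟨hq1, hq2⟩, -⟩ := hprop a1 ha1 a2 ha2 b hb b' hb'
    exact ⟨a1, a2, b, b', rfl, hq1, hq2⟩
  · have hmin' : ∀ S : Set L, ((S ∈ splits g' ∧ S ∉ splits g) ∨
        (S ∈ splits g ∧ S ∉ splits g')) → S₀.ncard ≤ S.ncard := fun S hS => hmin S hS.symm
    obtain ⟨A1, A2, C, D, n1, n2, n3, n4, i12, i34, hU, hUc, hprop⟩ :=
      QD.core hg' hg hin hout hmin'
    refine QD.count_lemma n1 n2 n3 n4 i12 i34 (by rw [hU]; exact hUc) ?_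
    intro a1 ha1 a2 ha2 b hb b' hb'
    obtain ⟨-, hq1, hq2⟩ := hprop a1 ha1 a2 ha2 b hb b' hb'
    refine ⟨a1, b, a2, b', ?_, hq1, hq2⟩
    ext t
    simp only [Finset.mem_insert, Finset.mem_singleton]
    tauto
end

section
/- If T and T' are distinct unrooted binary trees on the same leaf set, then there exists a split (S_1', S_2') of T' (induced by removing an internal edge of T') and a split (S_1, S_2) of T such that all four intersections S_1 ∩ S_1', S_1 ∩ S_2', S_2 ∩ S_1', S_2 ∩ S_2' are nonempty. -/
open SimpleGraph

section Lemmas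

variable {V : Type} {g : SimpleGraph V}

lemma no_reach (ha : g.IsAcyclic) {u v : V} (h : g.Adj u v) :
    ¬ (g.deleteEdges {s(u,v)}).Reachable u v :=
  isBridge_iff.mp ((isAcyclic_iff_forall_adj_isBridge.mp ha) h)

lemma avoid (ha : g.IsAcyclic) {w u z : V} (h : g.Adj w u)
    (p : (g.deleteEdges {s(w,u)}).Walk z w) : u ∉ p.support := by
  classical
  intro hu
  exact no_reach ha h (Reachable.symm ⟨p.dropUntil u hu⟩)

lemma reach_step (ha : g.IsAcyclic) {w u v z : V} (hwu : g.Adj w u) (huv : g.Adj u v)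
    (hne : w ≠ v) (hr : (g.deleteEdges {s(w,u)}).Reachable z w) :
    (g.deleteEdges {s(u,v)}).Reachable z u := by
  obtain ⟨p⟩ := hr
  have hu : u ∉ p.support := avoid ha hwu p
  have hedges : ∀ e ∈ p.edges, e ∈ (g.deleteEdges {s(u,v)}).edgeSet := by
    intro e he
    have h1 : e ∈ (g.deleteEdges {s(w,u)}).edgeSet := p.edges_subset_edgeSet he
    rw [edgeSet_deleteEdges] at h1 ⊢
    refine ⟨h1.1, ?_⟩
    simp only [Set.mem_singleton_iff]
    rintro rfl
    exact hu (p.fst_mem_support_of_mem_edges he)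
  have hadj : (g.deleteEdges {s(u,v)}).Adj w u := by
    rw [deleteEdges_adj]
    refine ⟨hwu, ?_⟩
    simp only [Set.mem_singleton_iff, Sym2.eq_iff]
    rintro (⟨h1, -⟩ | ⟨h1, -⟩)
    · exact hwu.ne h1
    · exact hne h1
  exact Reachable.trans ⟨p.transfer _ hedges⟩ ⟨Walk.cons hadj Walk.nil⟩

lemma reach_or_aux (ha : g.IsAcyclic) {u v : V} (huv : g.Adj u v) :
    ∀ {z y : V} (p : g.Walk z y), y = u →
      (g.deleteEdges {s(u,v)}).Reachable z u ∨ (g.deleteEdges {s(u,v)}).Reachable z v := by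
  intro z y p
  induction p with
  | nil => rintro rfl; exact Or.inl (Reachable.refl _)
  | @cons a b y hab q ih =>
    intro hy
    rcases ih hy with h | h
    all_goals {
      by_cases he : s(a, b) = s(u, v)
      · rw [Sym2.eq_iff] at he
        rcases he with ⟨rfl, rfl⟩ | ⟨rfl, rfl⟩
        · exact Or.inl (Reachable.refl _)
        · exact Or.inr (Reachable.refl _)
      · have hadj : (g.deleteEdges {s(u,v)}).Adj a b := by
          rw [deleteEdges_adj]
          exact ⟨hab, by simpa using he⟩
        first
          | exact Or.inl (Reachable.trans ⟨Walk.cons hadj Walk.nil⟩ h)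
          | exact Or.inr (Reachable.trans ⟨Walk.cons hadj Walk.nil⟩ h) }

lemma reach_or (ha : g.IsAcyclic) {u v : V} (huv : g.Adj u v) {z : V} (hr : g.Reachable z u) :
    (g.deleteEdges {s(u,v)}).Reachable z u ∨ (g.deleteEdges {s(u,v)}).Reachable z v := by
  obtain ⟨p⟩ := hr
  exact reach_or_aux ha huv p rfl

lemma delete_swap (u v : V) : g.deleteEdges {s(u,v)} = g.deleteEdges {s(v,u)} := by
  rw [Sym2.eq_swap]

end Lemmas

section SplitLemmas

variable {L I : Type} {g : SimpleGraph (L ⊕ I)}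

lemma splitOf_compl (hc : g.Connected) (ha : g.IsAcyclic) {u v : L ⊕ I} (huv : g.Adj u v) :
    splitOf g v u = (splitOf g u v)ᶜ := by
  ext x
  simp only [splitOf, Set.mem_setOf_eq, Set.mem_compl_iff]
  rw [show g.deleteEdges {s(v,u)} = g.deleteEdges {s(u,v)} from (delete_swap u v).symm]
  constructor
  · intro h1 h2
    exact no_reach ha huv (h2.symm.trans h1)
  · intro h2
    rcases reach_or ha huv (hc.preconnected (Sum.inl x) u) with h | h
    · exact absurd h h2
    · exact h

lemma reach_isolated {G : SimpleGraph (L ⊕ I)} {u z : L ⊕ I}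
    (h : ∀ w, ¬ G.Adj u w) (hr : G.Reachable z u) : z = u := by
  obtain ⟨p⟩ := hr.symm
  cases p with
  | nil => rfl
  | cons hadj q => exact absurd hadj (h _)

lemma splitOf_leaf_eq (hdegL : ∀ l : L, pdeg g (Sum.inl l) = 1) {x : L} {w : L ⊕ I}
    (h : g.Adj (Sum.inl x) w) : splitOf g (Sum.inl x) w = {x} := by
  have h1 : (g.neighborSet (Sum.inl x)).ncard = 1 := hdegL x
  obtain ⟨a, ha⟩ := Set.ncard_eq_one.mp h1
  have hw : w = a := by
    have hm : w ∈ g.neighborSet (Sum.inl x) := h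
    rwa [ha, Set.mem_singleton_iff] at hm
  rw [← hw] at ha
  have hiso : ∀ z, ¬ (g.deleteEdges {s(Sum.inl x, w)}).Adj (Sum.inl x) z := by
    intro z hz
    rw [deleteEdges_adj] at hz
    have hza : z = w := by
      have hm : z ∈ g.neighborSet (Sum.inl x) := hz.1
      rwa [ha, Set.mem_singleton_iff] at hm
    subst hza
    exact hz.2 rfl
  ext y
  simp only [splitOf, Set.mem_setOf_eq, Set.mem_singleton_iff]
  constructor
  · intro hr
    exact Sum.inl_injective (reach_isolated hiso hr)
  · rintro rfl
    exact Reachable.refl _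

lemma singleton_mem_splits (hdegL : ∀ l : L, pdeg g (Sum.inl l) = 1) (x : L) :
    {x} ∈ splits g := by
  have h1 : (g.neighborSet (Sum.inl x)).ncard = 1 := hdegL x
  obtain ⟨a, ha⟩ := Set.ncard_eq_one.mp h1
  have hadj : g.Adj (Sum.inl x) a := by
    have : a ∈ g.neighborSet (Sum.inl x) := by rw [ha]; rfl
    exact this
  exact ⟨Sum.inl x, a, hadj, (splitOf_leaf_eq hdegL hadj).symm⟩

lemma compl_mem_splits (hc : g.Connected) (ha : g.IsAcyclic) {X : Set L}
    (hX : X ∈ splits g) : Xᶜ ∈ splits g := by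
  obtain ⟨u, v, huv, rfl⟩ := hX
  exact ⟨v, u, huv.symm, (splitOf_compl hc ha huv).symm⟩

end SplitLemmas

section MoreLemmas

variable {L I : Type} {g : SimpleGraph (L ⊕ I)}

lemma splitOf_nonempty_aux [Fintype L] [Fintype I] (ha : g.IsAcyclic)
    (hdegI : ∀ i : I, pdeg g (Sum.inr i) = 3) :
    ∀ (n : ℕ) {u v : L ⊕ I}, g.Adj u v →
      ({z : L ⊕ I | (g.deleteEdges {s(u,v)}).Reachable z u}).ncard ≤ n →
      (splitOf g u v).Nonempty := by
  intro n
  induction n with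
  | zero =>
    intro u v huv hcard
    exfalso
    have hu : u ∈ {z : L ⊕ I | (g.deleteEdges {s(u,v)}).Reachable z u} := Reachable.refl _
    have h0 : ({z : L ⊕ I | (g.deleteEdges {s(u,v)}).Reachable z u}).ncard = 0 :=
      Nat.le_zero.mp hcard
    rw [Set.ncard_eq_zero (Set.toFinite _)] at h0
    rw [h0] at hu
    exact hu
  | succ n ih =>
    intro u v huv hcard
    cases u with
    | inl x => exact ⟨x, Reachable.refl _⟩
    | inr i =>
      have h3 : (g.neighborSet (Sum.inr i)).ncard = 3 := hdegI i
      have hex : ∃ w ∈ g.neighborSet (Sum.inr i), w ≠ v := by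
        by_contra hcon
        push_neg at hcon
        have hsub : g.neighborSet (Sum.inr i) ⊆ {v} := fun w hw => hcon w hw
        have hle := Set.ncard_le_ncard hsub (Set.toFinite _)
        rw [h3, Set.ncard_singleton] at hle
        omega
      obtain ⟨w, hw, hwv⟩ := hex
      have hwu : g.Adj w (Sum.inr i) := ((g.mem_neighborSet _ _).mp hw).symm
      have hsub : {z : L ⊕ I | (g.deleteEdges {s(w, Sum.inr i)}).Reachable z w} ⊆
          {z : L ⊕ I | (g.deleteEdges {s(Sum.inr i, v)}).Reachable z (Sum.inr i)} :=
        fun z hz => reach_step ha hwu huv hwv hz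
      have hmem : Sum.inr i ∈
          {z : L ⊕ I | (g.deleteEdges {s(Sum.inr i, v)}).Reachable z (Sum.inr i)} :=
        Reachable.refl _
      have hnmem : Sum.inr i ∉
          {z : L ⊕ I | (g.deleteEdges {s(w, Sum.inr i)}).Reachable z w} :=
        fun hr => no_reach ha hwu (Reachable.symm hr)
      have hlt : ({z : L ⊕ I | (g.deleteEdges {s(w, Sum.inr i)}).Reachable z w}).ncard <
          ({z : L ⊕ I | (g.deleteEdges {s(Sum.inr i, v)}).Reachable z (Sum.inr i)}).ncard :=
        Set.ncard_lt_ncard ⟨hsub, fun hRR => hnmem (hRR hmem)⟩ (Set.toFinite _)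
      obtain ⟨x, hx⟩ := ih hwu (by omega)
      exact ⟨x, reach_step ha hwu huv hwv hx⟩

lemma splitOf_nonempty [Fintype L] [Fintype I] (ha : g.IsAcyclic)
    (hdegI : ∀ i : I, pdeg g (Sum.inr i) = 3) {u v : L ⊕ I} (huv : g.Adj u v) :
    (splitOf g u v).Nonempty :=
  splitOf_nonempty_aux ha hdegI
    ({z : L ⊕ I | (g.deleteEdges {s(u,v)}).Reachable z u}).ncard huv le_rfl

lemma exists_entry (hc : g.Connected) {u : L ⊕ I} {x : L} (hne : Sum.inl x ≠ u) :
    ∃ w, g.Adj w u ∧ (g.deleteEdges {s(w,u)}).Reachable (Sum.inl x) w := by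
  classical
  obtain ⟨p0⟩ := hc.preconnected (Sum.inl x) u
  let p : g.Path (Sum.inl x) u := p0.toPath
  obtain ⟨w, hadj, q, hq⟩ := Walk.exists_eq_cons_of_ne (Ne.symm hne) p.1.reverse
  refine ⟨w, hadj.symm, ?_⟩
  have hpath : p.1.reverse.IsPath := p.2.reverse
  rw [hq, Walk.cons_isPath_iff] at hpath
  have hu : u ∉ q.reverse.support := by
    rw [Walk.support_reverse, List.mem_reverse]
    exact hpath.2
  refine ⟨(q.reverse).toDeleteEdges {s(w,u)} ?_⟩
  intro e he
  simp only [Set.mem_singleton_iff]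
  rintro rfl
  exact hu (q.reverse.snd_mem_support_of_mem_edges he)

lemma entry_unique (ha : g.IsAcyclic) {u w1 w2 : L ⊕ I} {x : L}
    (h1 : g.Adj w1 u) (h2 : g.Adj w2 u)
    (r1 : (g.deleteEdges {s(w1,u)}).Reachable (Sum.inl x) w1)
    (r2 : (g.deleteEdges {s(w2,u)}).Reachable (Sum.inl x) w2) : w1 = w2 := by
  classical
  obtain ⟨p1'⟩ := r1
  obtain ⟨p2'⟩ := r2
  let q1 := p1'.toPath
  let q2 := p2'.toPath
  have hu1 : u ∉ q1.1.support := avoid ha h1 q1.1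
  have hu2 : u ∉ q2.1.support := avoid ha h2 q2.1
  have he1 : ∀ e ∈ q1.1.edges, e ∈ g.edgeSet := fun e he =>
    ((edgeSet_deleteEdges _ ▸ q1.1.edges_subset_edgeSet he) : e ∈ g.edgeSet \ _).1
  have he2 : ∀ e ∈ q2.1.edges, e ∈ g.edgeSet := fun e he =>
    ((edgeSet_deleteEdges _ ▸ q2.1.edges_subset_edgeSet he) : e ∈ g.edgeSet \ _).1
  let Q1 : g.Walk (Sum.inl x) w1 := q1.1.transfer g he1
  let Q2 : g.Walk (Sum.inl x) w2 := q2.1.transfer g he2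
  have hQ1p : Q1.IsPath := q1.2.transfer he1
  have hQ2p : Q2.IsPath := q2.2.transfer he2
  have hQ1u : u ∉ Q1.support := by
    rw [Walk.support_transfer]; exact hu1
  have hQ2u : u ∉ Q2.support := by
    rw [Walk.support_transfer]; exact hu2
  have hP1 : (Q1.concat h1).IsPath := by
    rw [← Walk.isPath_reverse_iff, Walk.reverse_concat]
    exact (hQ1p.reverse).cons (by rwa [Walk.support_reverse, List.mem_reverse])
  have hP2 : (Q2.concat h2).IsPath := by
    rw [← Walk.isPath_reverse_iff, Walk.reverse_concat]
    exact (hQ2p.reverse).cons (by rwa [Walk.support_reverse, List.mem_reverse])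
  have heq : (⟨Q1.concat h1, hP1⟩ : g.Path (Sum.inl x) u) = ⟨Q2.concat h2, hP2⟩ :=
    ha.path_unique _ _
  have heq' : (Q1.concat h1).reverse = (Q2.concat h2).reverse := by
    rw [Subtype.ext_iff] at heq
    exact congrArg Walk.reverse heq
  rw [Walk.reverse_concat, Walk.reverse_concat] at heq'
  injection heq'

end MoreLemmas

section Key

variable {L I : Type}

lemma three_neighbors {g : SimpleGraph (L ⊕ I)} {u v : L ⊕ I}
    (h3 : (g.neighborSet u).ncard = 3) (hv : g.Adj u v) :
    ∃ w1 w2, w1 ≠ w2 ∧ w1 ≠ v ∧ w2 ≠ v ∧ g.Adj u w1 ∧ g.Adj u w2 ∧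
      ∀ w, g.Adj u w → w = v ∨ w = w1 ∨ w = w2 := by
  obtain ⟨a, b, c, hab, hac, hbc, hN⟩ := Set.ncard_eq_three.mp h3
  have hmem : ∀ w, w ∈ ({a, b, c} : Set (L ⊕ I)) → g.Adj u w := by
    intro w hw
    rw [← hN] at hw
    exact hw
  have hclass : ∀ w, g.Adj u w → w = a ∨ w = b ∨ w = c := by
    intro w hw
    have : w ∈ g.neighborSet u := hw
    rw [hN] at this
    simpa using this
  have hvN : v = a ∨ v = b ∨ v = c := hclass v hv
  rcases hvN with rfl | rfl | rfl
  · exact ⟨b, c, hbc, hab.symm, hac.symm, hmem b (by simp), hmem c (by simp), hclass⟩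
  · refine ⟨a, c, hac, hab, hbc.symm, hmem a (by simp), hmem c (by simp), ?_⟩
    intro w hw
    rcases hclass w hw with h | h | h <;> tauto
  · refine ⟨a, b, hab, hac, hbc, hmem a (by simp), hmem b (by simp), ?_⟩
    intro w hw
    rcases hclass w hw with h | h | h <;> tauto

lemma key_lemma [Fintype L] [Fintype I] (T : SimpleGraph (L ⊕ I)) (hph : IsPhylo T)
    (X : Set L) (hX : X ∉ splits T) (hXne : X.Nonempty) (hXcne : Xᶜ.Nonempty) :
    ∃ S ∈ splits T, (S ∩ X).Nonempty ∧ (S ∩ Xᶜ).Nonempty ∧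
      (Sᶜ ∩ X).Nonempty ∧ (Sᶜ ∩ Xᶜ).Nonempty := by
  obtain ⟨hc, ha, hdegL, hdegI⟩ := hph
  by_contra hcon
  push_neg at hcon
  -- the set of "mixed" oriented edges
  set Mixed : (L ⊕ I) → (L ⊕ I) → Prop := fun u v =>
    T.Adj u v ∧ (splitOf T u v ∩ X).Nonempty ∧ (splitOf T u v ∩ Xᶜ).Nonempty with hMixed
  -- a mixed edge exists
  have hMex : ∃ u v, Mixed u v := by
    obtain ⟨a, haX⟩ := hXne
    obtain ⟨w0, hw0⟩ := Set.ncard_eq_one.mp (hdegL a)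
    have hadj : T.Adj (Sum.inl a) w0 := by
      have : w0 ∈ T.neighborSet (Sum.inl a) := by rw [hw0]; rfl
      exact this
    have hsplit : splitOf T w0 (Sum.inl a) = ({a} : Set L)ᶜ := by
      rw [splitOf_compl hc ha hadj, splitOf_leaf_eq hdegL hadj]
    have hXna : X ≠ {a} := by
      intro hEq
      exact hX (hEq ▸ singleton_mem_splits hdegL a)
    have hb : ∃ b ∈ X, b ≠ a := by
      by_contra hbb
      push_neg at hbb
      exact hXna (Set.eq_singleton_iff_unique_mem.mpr ⟨haX, hbb⟩)
    obtain ⟨b, hbX, hba⟩ := hb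
    obtain ⟨c, hcX⟩ := hXcne
    have hca : c ≠ a := fun hEq => hcX (hEq ▸ haX)
    refine ⟨w0, Sum.inl a, hadj.symm, ⟨b, ?_, hbX⟩, ⟨c, ?_, hcX⟩⟩
    · rw [hsplit]; exact hba
    · rw [hsplit]; exact hca
  -- pick a mixed edge with minimal side
  set nset : Set ℕ := {n | ∃ u v, Mixed u v ∧ (splitOf T u v).ncard = n} with hnset
  have hnsetne : nset.Nonempty := by
    obtain ⟨u, v, huv⟩ := hMex
    exact ⟨_, u, v, huv, rfl⟩
  obtain ⟨u, v, hmix, hn0⟩ := Nat.sInf_mem hnsetne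
  have hmin : ∀ u' v', Mixed u' v' → sInf nset ≤ (splitOf T u' v').ncard :=
    fun u' v' hm => Nat.sInf_le ⟨u', v', hm, rfl⟩
  cases u with
  | inl a =>
    have hB : splitOf T (Sum.inl a) v = {a} := splitOf_leaf_eq hdegL hmix.1
    obtain ⟨y1, hy1⟩ := hmix.2.1
    obtain ⟨y2, hy2⟩ := hmix.2.2
    rw [hB] at hy1 hy2
    obtain ⟨hy1a, hy1X⟩ := hy1
    obtain ⟨hy2a, hy2X⟩ := hy2
    rw [Set.mem_singleton_iff] at hy1a hy2a
    subst hy1a; subst hy2a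
    exact hy2X hy1X
  | inr i =>
    have huv : T.Adj (Sum.inr i) v := hmix.1
    obtain ⟨w1, w2, hw12, hw1v, hw2v, hadj1', hadj2', hclass⟩ :=
      three_neighbors (hdegI i) huv
    have hadj1 : T.Adj w1 (Sum.inr i) := hadj1'.symm
    have hadj2 : T.Adj w2 (Sum.inr i) := hadj2'.symm
    set A1 := splitOf T w1 (Sum.inr i) with hA1
    set A2 := splitOf T w2 (Sum.inr i) with hA2
    set B := splitOf T (Sum.inr i) v with hB
    have hA1B : A1 ⊆ B := fun x hx => reach_step ha hadj1 huv hw1v hx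
    have hA2B : A2 ⊆ B := fun x hx => reach_step ha hadj2 huv hw2v hx
    have hBsub : B ⊆ A1 ∪ A2 := by
      intro x hx
      have hxu : Sum.inl x ≠ Sum.inr i := by simp
      obtain ⟨w, hwadj, hreach⟩ := exists_entry hc hxu
      rcases hclass w hwadj.symm with rfl | rfl | rfl
      · exfalso
        have hxc : x ∈ Bᶜ := by
          rw [hB, ← splitOf_compl hc ha huv]
          exact hreach
        exact hxc hx
      · exact Or.inl hreach
      · exact Or.inr hreach
    have hdisj : ∀ x, x ∈ A1 → x ∈ A2 → False :=
      fun x hx1 hx2 => hw12 (entry_unique ha hadj1 hadj2 hx1 hx2)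
    have hA1ne : A1.Nonempty := splitOf_nonempty ha hdegI hadj1
    have hA2ne : A2.Nonempty := splitOf_nonempty ha hdegI hadj2
    have hA1lt : A1.ncard < B.ncard := by
      refine Set.ncard_lt_ncard ⟨hA1B, fun hBA => ?_⟩ (Set.toFinite _)
      obtain ⟨y, hy⟩ := hA2ne
      exact hdisj y (hBA (hA2B hy)) hy
    have hA2lt : A2.ncard < B.ncard := by
      refine Set.ncard_lt_ncard ⟨hA2B, fun hBA => ?_⟩ (Set.toFinite _)
      obtain ⟨y, hy⟩ := hA1ne
      exact hdisj y hy (hBA (hA1B hy))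
    have unmix1 : A1 ∩ X = ∅ ∨ A1 ∩ Xᶜ = ∅ := by
      by_contra hh
      push_neg at hh
      have hm : Mixed w1 (Sum.inr i) := ⟨hadj1, hh.1, hh.2⟩
      have hle := hmin _ _ hm
      have he1 : (splitOf T w1 (Sum.inr i)).ncard = A1.ncard := rfl
      omega
    have unmix2 : A2 ∩ X = ∅ ∨ A2 ∩ Xᶜ = ∅ := by
      by_contra hh
      push_neg at hh
      have hm : Mixed w2 (Sum.inr i) := ⟨hadj2, hh.1, hh.2⟩
      have hle := hmin _ _ hm
      have he2 : (splitOf T w2 (Sum.inr i)).ncard = A2.ncard := rfl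
      omega
    have hBmem : B ∈ splits T := ⟨Sum.inr i, v, huv, rfl⟩
    have final : ∀ Y : Set L, Y.Nonempty → Y ∉ splits T → Y ⊆ A1 ∪ A2 →
        (A1 ∩ Y = ∅ ∨ A1 ∩ Yᶜ = ∅) → (A2 ∩ Y = ∅ ∨ A2 ∩ Yᶜ = ∅) → False := by
      intro Y hYne hYns hYsub hu1 hu2
      have hsubA1 : A1 ∩ Y = ∅ → ∀ y ∈ Y, y ∈ A1 → False :=
        fun he y hy h1 => Set.eq_empty_iff_forall_notMem.mp he y ⟨h1, hy⟩
      have hsubA2 : A2 ∩ Y = ∅ → ∀ y ∈ Y, y ∈ A2 → False :=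
        fun he y hy h1 => Set.eq_empty_iff_forall_notMem.mp he y ⟨h1, hy⟩
      have hfull1 : A1 ∩ Yᶜ = ∅ → A1 ⊆ Y := by
        intro he z hz
        by_contra hzY
        exact Set.eq_empty_iff_forall_notMem.mp he z ⟨hz, hzY⟩
      have hfull2 : A2 ∩ Yᶜ = ∅ → A2 ⊆ Y := by
        intro he z hz
        by_contra hzY
        exact Set.eq_empty_iff_forall_notMem.mp he z ⟨hz, hzY⟩
      rcases hu1 with e1 | f1 <;> rcases hu2 with e2 | f2
      · obtain ⟨y, hy⟩ := hYne
        rcases hYsub hy with h | h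
        · exact hsubA1 e1 y hy h
        · exact hsubA2 e2 y hy h
      · have hEq : Y = A2 := by
          apply Set.Subset.antisymm
          · intro y hy
            rcases hYsub hy with h | h
            · exact absurd h (fun hh => hsubA1 e1 y hy hh)
            · exact h
          · exact hfull2 f2
        exact hYns (hEq ▸ ⟨w2, Sum.inr i, hadj2, rfl⟩)
      · have hEq : Y = A1 := by
          apply Set.Subset.antisymm
          · intro y hy
            rcases hYsub hy with h | h
            · exact h
            · exact absurd h (fun hh => hsubA2 e2 y hy hh)
          · exact hfull1 f1
        exact hYns (hEq ▸ ⟨w1, Sum.inr i, hadj1, rfl⟩)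
      · have hEq : Y = B := by
          apply Set.Subset.antisymm
          · intro y hy
            rcases hYsub hy with h | h
            · exact hA1B h
            · exact hA2B h
          · intro y hy
            rcases hBsub hy with h | h
            · exact hfull1 f1 h
            · exact hfull2 f2 h
        exact hYns (hEq ▸ hBmem)
    -- use compatibility on B
    have h4 := hcon B hBmem hmix.2.1 hmix.2.2
    by_cases hcx : (Bᶜ ∩ X).Nonempty
    · -- then Bᶜ ∩ Xᶜ = ∅, i.e. Xᶜ ⊆ B
      have h5 : Bᶜ ∩ Xᶜ = ∅ := h4 hcx
      have hXcB : Xᶜ ⊆ B := by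
        intro z hz
        by_contra hzB
        exact Set.eq_empty_iff_forall_notMem.mp h5 z ⟨hzB, hz⟩
      have hXcns : Xᶜ ∉ splits T := by
        intro hmem
        have := compl_mem_splits hc ha hmem
        rw [compl_compl] at this
        exact hX this
      refine final Xᶜ hXcne hXcns (fun z hz => hBsub (hXcB hz)) ?_ ?_
      · rcases unmix1 with e | f
        · right; rwa [compl_compl]
        · left; exact f
      · rcases unmix2 with e | f
        · right; rwa [compl_compl]
        · left; exact f
    · -- X ⊆ B
      have hXB : X ⊆ B := by
        intro z hz
        by_contra hzB
        exact hcx ⟨z, hzB, hz⟩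
      exact final X hXne hX (fun z hz => hBsub (hXB hz)) unmix1 unmix2

end Key

/-- If `T` and `T'` are distinct unrooted binary trees on the
same leaf set, there is a split `(S', S'ᶜ)` of `T'` and a split `(S, Sᶜ)` of
`T` such that all four intersections are nonempty. -/
theorem exists_conflicting_splits {L I : Type} [Fintype L] [Fintype I]
    (g g' : SimpleGraph (L ⊕ I)) (hg : IsPhylo g) (hg' : IsPhylo g')
    (hdistinct : splits g ≠ splits g') :
    ∃ S' ∈ splits g', ∃ S ∈ splits g,
      (S ∩ S').Nonempty ∧ (S ∩ S'ᶜ).Nonempty ∧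
      (Sᶜ ∩ S').Nonempty ∧ (Sᶜ ∩ S'ᶜ).Nonempty := by
  by_cases hcase : ∃ X ∈ splits g', X ∉ splits g
  · obtain ⟨X, hX', hXn⟩ := hcase
    obtain ⟨u, v, huv, hXeq⟩ := hX'
    obtain ⟨hc', ha', hdegL', hdegI'⟩ := hg'
    have hXne : X.Nonempty := by
      rw [hXeq]; exact splitOf_nonempty ha' hdegI' huv
    have hXcne : Xᶜ.Nonempty := by
      rw [hXeq, ← splitOf_compl hc' ha' huv]
      exact splitOf_nonempty ha' hdegI' huv.symm
    obtain ⟨S, hS, h1, h2, h3, h4⟩ := key_lemma g hg X hXn hXne hXcne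
    exact ⟨X, ⟨u, v, huv, hXeq⟩, S, hS, h1, h2, h3, h4⟩
  · have hcase2 : ∃ X ∈ splits g, X ∉ splits g' := by
      by_contra hc2
      push_neg at hcase hc2
      exact hdistinct (Set.Subset.antisymm hc2 hcase)
    obtain ⟨X, hX, hXn⟩ := hcase2
    obtain ⟨u, v, huv, hXeq⟩ := hX
    obtain ⟨hc, ha, hdegL, hdegI⟩ := hg
    have hXne : X.Nonempty := by
      rw [hXeq]; exact splitOf_nonempty ha hdegI huv
    have hXcne : Xᶜ.Nonempty := by
      rw [hXeq, ← splitOf_compl hc ha huv]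
      exact splitOf_nonempty ha hdegI huv.symm
    obtain ⟨S', hS', h1, h2, h3, h4⟩ := key_lemma g' hg' X hXn hXne hXcne
    exact ⟨S', hS', X, ⟨u, v, huv, hXeq⟩, by rwa [Set.inter_comm],
      by rwa [Set.inter_comm], by rwa [Set.inter_comm], by rwa [Set.inter_comm]⟩
end
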